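/- arXiv:2308.07698 — 7 statements merged into one kernel-verified Lean document; each statement's English description precedes it below -/
import Mathlib

section
/- For any multiset A of positive integers, the derivative of f_{A,n}(x) satisfies f_{A,n}'(x) = ∑_{j=1}^{n} (σ_A(j)/j) f_{A,n-j}(x) for all n ≥ 1. -/
open scoped Classical

/-- Sum of those divisors of `j` that belong to the multiset of positive integers
with multiplicity function `μ`, counted with multiplicity: `σ_A(j) = ∑_{d ∣ j} d·μ(d)`. -/
noncomputable def sigmaA (μ : ℕ → ℕ) (j : ℕ) : ℕ := ∑ d ∈ Nat.divisors j, d * μ d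

/-- The polynomials `f_{A,n}(x)` associated with the multiset of positive integers
with multiplicity function `μ`, defined (equivalently to the generating function
`∑ f_{A,n}(x) qⁿ = ∏_{a∈A} (1/(1-q^a))^x`) by `f_{A,0} = 1` and the recurrence
`f_{A,n}(x) = (x/n) ∑_{j=1}^{n} σ_A(j) f_{A,n-j}(x)`. -/
noncomputable def fA (μ : ℕ → ℕ) : ℕ → ℝ → ℝ
  | 0, _ => 1
  | n + 1, x =>
      x / (n + 1) * ∑ j ∈ Finset.range (n + 1), (sigmaA μ (j + 1) : ℝ) * fA μ (n - j) x
  decreasing_by exact Nat.lt_succ_of_le (Nat.sub_le n j)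

/-- `f_{A,n}(x)` for an ordinary set `A` of positive integers. -/
noncomputable def fS (A : Set ℕ) : ℕ → ℝ → ℝ := fA (fun a => if a ∈ A then 1 else 0)

lemma fA_succ (μ : ℕ → ℕ) (n : ℕ) (x : ℝ) : fA μ (n+1) x =
    x / (n + 1) * ∑ j ∈ Finset.range (n + 1), (sigmaA μ (j + 1) : ℝ) * fA μ (n - j) x := by
  rw [fA]

lemma range_to_Icc (m : ℕ) (F : ℕ → ℝ) :
    ∑ j ∈ Finset.range m, F (j + 1) = ∑ j ∈ Finset.Icc 1 m, F j := by
  rw [← Finset.Ico_add_one_right_eq_Icc, Finset.sum_Ico_eq_sum_range]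
  simp [add_comm]

lemma sum_swap_aux (N : ℕ) (G : ℕ → ℕ → ℝ) :
    ∑ j ∈ Finset.Icc 1 N, ∑ i ∈ Finset.Icc 1 (N - j), G j i
      = ∑ j ∈ Finset.Icc 1 N, ∑ i ∈ Finset.Icc 1 (N - j), G i j := by
  have h : ∀ F : ℕ → ℕ → ℝ, ∑ j ∈ Finset.Icc 1 N, ∑ i ∈ Finset.Icc 1 (N - j), F j i
      = ∑ j ∈ Finset.Icc 1 N, ∑ i ∈ Finset.Icc 1 N, if j + i ≤ N then F j i else 0 := by
    intro F
    refine Finset.sum_congr rfl fun j hj => ?_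
    rw [Finset.sum_ite, Finset.sum_const_zero, add_zero]
    refine (Finset.sum_congr ?_ fun _ _ => rfl).symm
    have hj' := Finset.mem_Icc.mp hj
    ext i
    simp only [Finset.mem_filter, Finset.mem_Icc]
    omega
  rw [h, h, Finset.sum_comm]
  refine Finset.sum_congr rfl fun j _ => Finset.sum_congr rfl fun i _ => ?_
  rw [add_comm i j]

lemma fA_succ' (μ : ℕ → ℕ) (m : ℕ) (hm : 1 ≤ m) (x : ℝ) :
    fA μ m x = x / (m:ℝ) * ∑ i ∈ Finset.Icc 1 m, (sigmaA μ i : ℝ) * fA μ (m - i) x := by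
  obtain ⟨k, rfl⟩ : ∃ k, m = k + 1 := ⟨m - 1, by omega⟩
  rw [fA_succ, ← range_to_Icc (k+1) (fun i => (sigmaA μ i : ℝ) * fA μ (k + 1 - i) x)]
  push_cast
  exact congrArg (x / ((k:ℝ)+1) * ·)
    (Finset.sum_congr rfl fun i hi => by simp [Nat.succ_sub_succ])

lemma key (μ : ℕ → ℕ) : ∀ n : ℕ, ∀ x : ℝ,
    HasDerivAt (fA μ n) (∑ j ∈ Finset.Icc 1 n, (sigmaA μ j : ℝ) / j * fA μ (n - j) x) x := by
  intro n
  induction n using Nat.strong_induction_on with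
  | _ n ih =>
    match n with
    | 0 =>
      intro x
      simp only [Finset.Icc_eq_empty_of_lt Nat.one_pos, Finset.sum_empty]
      have : fA μ 0 = fun _ : ℝ => (1:ℝ) := by funext y; rw [fA]
      rw [this]
      exact hasDerivAt_const x 1
    | n + 1 =>
      intro x
      set N := n + 1 with hN
      -- derivative of the inner sum
      have hg : HasDerivAt (fun y => ∑ j ∈ Finset.range N, (sigmaA μ (j + 1) : ℝ) * fA μ (n - j) y)
          (∑ j ∈ Finset.range N, (sigmaA μ (j + 1) : ℝ) *
            (∑ i ∈ Finset.Icc 1 (n - j), (sigmaA μ i : ℝ) / i * fA μ (n - j - i) x)) x := by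
        refine HasDerivAt.fun_sum fun j hj => ?_
        exact (ih (n - j) (Nat.lt_succ_of_le (Nat.sub_le n j)) x).const_mul _
      have h1 : HasDerivAt (fun y : ℝ => y / (N : ℝ)) (1 / (N : ℝ)) x := by
        simpa using (hasDerivAt_id x).div_const (N : ℝ)
      have hprod := h1.mul hg
      have hfun : fA μ N = fun y : ℝ =>
          y / (N : ℝ) * ∑ j ∈ Finset.range N, (sigmaA μ (j + 1) : ℝ) * fA μ (n - j) y := by
        funext y
        rw [hN, fA_succ]
        push_cast
        ring_nf
      rw [hfun]
      refine hprod.congr_deriv (Eq.symm ?_)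
      -- now pure algebra
      have hA : ∑ j ∈ Finset.range N, (sigmaA μ (j+1) : ℝ) * fA μ (n - j) x
          = ∑ j ∈ Finset.Icc 1 N, (sigmaA μ j : ℝ) * fA μ (N - j) x := by
        rw [← range_to_Icc N (fun j => (sigmaA μ j : ℝ) * fA μ (N - j) x)]
        exact Finset.sum_congr rfl fun j hj => by simp [hN, Nat.succ_sub_succ]
      have hB : ∑ j ∈ Finset.range N, (sigmaA μ (j+1) : ℝ) *
            (∑ i ∈ Finset.Icc 1 (n - j), (sigmaA μ i : ℝ) / i * fA μ (n - j - i) x)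
          = ∑ j ∈ Finset.Icc 1 N, (sigmaA μ j : ℝ) *
            (∑ i ∈ Finset.Icc 1 (N - j), (sigmaA μ i : ℝ) / i * fA μ (N - j - i) x) := by
        rw [← range_to_Icc N (fun j => (sigmaA μ j : ℝ) *
            (∑ i ∈ Finset.Icc 1 (N - j), (sigmaA μ i : ℝ) / i * fA μ (N - j - i) x))]
        exact Finset.sum_congr rfl fun j hj => by simp [hN, Nat.succ_sub_succ]
      rw [hA, hB]
      have hB' : ∑ j ∈ Finset.Icc 1 N, (sigmaA μ j : ℝ) *
            (∑ i ∈ Finset.Icc 1 (N - j), (sigmaA μ i : ℝ) / i * fA μ (N - j - i) x)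
          = ∑ j ∈ Finset.Icc 1 N, (sigmaA μ j : ℝ) / j *
            (∑ i ∈ Finset.Icc 1 (N - j), (sigmaA μ i : ℝ) * fA μ (N - j - i) x) := by
        have hs := sum_swap_aux N
          (fun j i => (sigmaA μ j : ℝ) * ((sigmaA μ i : ℝ) / i * fA μ (N - j - i) x))
        calc ∑ j ∈ Finset.Icc 1 N, (sigmaA μ j : ℝ) *
              (∑ i ∈ Finset.Icc 1 (N - j), (sigmaA μ i : ℝ) / i * fA μ (N - j - i) x)
            = ∑ j ∈ Finset.Icc 1 N, ∑ i ∈ Finset.Icc 1 (N - j),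
                (sigmaA μ j : ℝ) * ((sigmaA μ i : ℝ) / i * fA μ (N - j - i) x) :=
              Finset.sum_congr rfl fun j _ => Finset.mul_sum _ _ _
          _ = ∑ j ∈ Finset.Icc 1 N, ∑ i ∈ Finset.Icc 1 (N - j),
                (sigmaA μ i : ℝ) * ((sigmaA μ j : ℝ) / j * fA μ (N - i - j) x) := hs
          _ = ∑ j ∈ Finset.Icc 1 N, (sigmaA μ j : ℝ) / j *
              (∑ i ∈ Finset.Icc 1 (N - j), (sigmaA μ i : ℝ) * fA μ (N - j - i) x) := by
              refine Finset.sum_congr rfl fun j _ => ?_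
              rw [Finset.mul_sum]
              refine Finset.sum_congr rfl fun i _ => ?_
              have hsub : N - i - j = N - j - i := by omega
              rw [hsub]; ring
      rw [hB', Finset.mul_sum, Finset.mul_sum, ← Finset.sum_add_distrib]
      refine Finset.sum_congr rfl fun j hj => ?_
      have hj' := Finset.mem_Icc.mp hj
      have hj0 : (j:ℝ) ≠ 0 := Nat.cast_ne_zero.mpr (by omega)
      rcases eq_or_lt_of_le hj'.2 with hje | hjlt
      · -- j = N
        have h0 : N - j = 0 := by omega
        rw [h0]
        simp only [Finset.Icc_eq_empty_of_lt Nat.one_pos, Finset.sum_empty, mul_zero, add_zero]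
        have hf0 : fA μ 0 x = 1 := by rw [fA]
        rw [hf0, mul_one, mul_one]
        have hjN : (j:ℝ) = (N:ℝ) := by exact_mod_cast congrArg (Nat.cast (R := ℝ)) hje
        rw [hjN]; ring
      · -- j < N
        set m := N - j with hm
        have hm1 : 1 ≤ m := by omega
        have hfm : fA μ m x
            = x / (m:ℝ) * ∑ i ∈ Finset.Icc 1 m, (sigmaA μ i : ℝ) * fA μ (m - i) x :=
          fA_succ' μ m hm1 x
        rw [hfm]
        have hm0 : (m:ℝ) ≠ 0 := Nat.cast_ne_zero.mpr (by omega)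
        have hNr : (N:ℝ) = (j:ℝ) + (m:ℝ) := by
          have : N = j + m := by omega
          exact_mod_cast this
        rw [hNr]
        have hjm0 : (j:ℝ) + (m:ℝ) ≠ 0 := by
          have h1 : (1:ℝ) ≤ (j:ℝ) := by exact_mod_cast hj'.1
          have h2 : (0:ℝ) ≤ (m:ℝ) := Nat.cast_nonneg m
          intro h; linarith
        field_simp

/-- The derivative formula f_{A,n}'(x) = sum_{j=1}^{n} (sigma_A(j)/j) f_{A,n-j}(x) for any multiset A of positive integers and all n >= 1. -/
theorem stmt_3 (μ : ℕ → ℕ) (hμ0 : μ 0 = 0) (n : ℕ) (hn : 1 ≤ n) (x : ℝ) :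
    deriv (fA μ n) x = ∑ j ∈ Finset.Icc 1 n, (sigmaA μ j : ℝ) / j * fA μ (n - j) x :=
  (key μ n x).deriv
end

section
/- Let A be a multiset of positive integers containing 1. For every n ≥ 1 and every real x ≥ 1, the derivatives satisfy 1 ≤ f_{A,n}'(x) < f_{A,n+1}'(x). -/
open scoped Classical

namespace StmtAux

/-- formal derivative of `fA` -/
noncomputable def gA (μ : ℕ → ℕ) : ℕ → ℝ → ℝ
  | 0, _ => 0
  | n + 1, x =>
      (∑ j ∈ Finset.range (n + 1), (sigmaA μ (j + 1) : ℝ) * fA μ (n - j) x) / (n + 1)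
        + x / (n + 1) * ∑ j ∈ Finset.range (n + 1), (sigmaA μ (j + 1) : ℝ) * gA μ (n - j) x
  decreasing_by exact Nat.lt_succ_of_le (Nat.sub_le n j)

variable (μ : ℕ → ℕ)

lemma sigma_one_le (hμ1 : 1 ≤ μ 1) {j : ℕ} (hj : 1 ≤ j) : 1 ≤ sigmaA μ j := by
  have h1 : 1 ∈ Nat.divisors j := Nat.one_mem_divisors.mpr (by omega)
  calc 1 ≤ 1 * μ 1 := by omega
    _ ≤ ∑ d ∈ Nat.divisors j, d * μ d :=
      Finset.single_le_sum (f := fun d => d * μ d) (fun i _ => Nat.zero_le _) h1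

lemma sigma_one_le' (hμ1 : 1 ≤ μ 1) {j : ℕ} (hj : 1 ≤ j) : (1 : ℝ) ≤ (sigmaA μ j : ℝ) := by
  exact_mod_cast sigma_one_le μ hμ1 hj

lemma reflect (F : ℕ → ℝ) (n : ℕ) :
    ∑ j ∈ Finset.range (n + 1), (sigmaA μ (j + 1) : ℝ) * F (n - j)
      = ∑ i ∈ Finset.range (n + 1), (sigmaA μ (n + 1 - i) : ℝ) * F i := by
  rw [← Finset.sum_range_reflect (fun i => (sigmaA μ (n + 1 - i) : ℝ) * F i) (n + 1)]
  refine Finset.sum_congr rfl fun j hj => ?_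
  have hj' : j ≤ n := by simpa [Nat.lt_succ_iff] using hj
  have h1 : n + 1 - 1 - j = n - j := by omega
  have h2 : n + 1 - (n - j) = j + 1 := by omega
  rw [h1, h2]

lemma fA_eq (n : ℕ) (x : ℝ) :
    (n : ℝ) * fA μ n x = x * ∑ i ∈ Finset.range n, (sigmaA μ (n - i) : ℝ) * fA μ i x := by
  cases n with
  | zero => simp
  | succ n =>
    rw [fA, ← reflect]
    push_cast
    have : ((n : ℝ) + 1) ≠ 0 := by positivity
    field_simp

lemma gA_eq (n : ℕ) (x : ℝ) :
    (n : ℝ) * gA μ n x = (∑ i ∈ Finset.range n, (sigmaA μ (n - i) : ℝ) * fA μ i x)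
      + x * ∑ i ∈ Finset.range n, (sigmaA μ (n - i) : ℝ) * gA μ i x := by
  cases n with
  | zero => simp [gA]
  | succ n =>
    rw [gA, ← reflect, ← reflect]
    push_cast
    have : ((n : ℝ) + 1) ≠ 0 := by positivity
    field_simp

lemma fA_zero (x : ℝ) : fA μ 0 x = 1 := by rw [fA]

lemma f_nonneg {x : ℝ} (hx : 0 ≤ x) : ∀ n, 0 ≤ fA μ n x := by
  intro n
  induction n using Nat.strong_induction_on with
  | _ n ih =>
    match n with
    | 0 => rw [fA]; norm_num
    | n + 1 =>
      rw [fA]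
      apply mul_nonneg (by positivity)
      apply Finset.sum_nonneg
      intro j hj
      exact mul_nonneg (by positivity) (ih (n - j) (Nat.lt_succ_of_le (Nat.sub_le n j)))

lemma g_nonneg {x : ℝ} (hx : 0 ≤ x) : ∀ n, 0 ≤ gA μ n x := by
  intro n
  induction n using Nat.strong_induction_on with
  | _ n ih =>
    match n with
    | 0 => rw [gA]
    | n + 1 =>
      rw [gA]
      have h1 : (0:ℝ) ≤ ∑ j ∈ Finset.range (n + 1), (sigmaA μ (j + 1) : ℝ) * fA μ (n - j) x := by
        apply Finset.sum_nonneg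
        intro j hj
        exact mul_nonneg (by positivity) (f_nonneg μ hx _)
      have h2 : (0:ℝ) ≤ ∑ j ∈ Finset.range (n + 1), (sigmaA μ (j + 1) : ℝ) * gA μ (n - j) x := by
        apply Finset.sum_nonneg
        intro j hj
        exact mul_nonneg (by positivity) (ih (n - j) (Nat.lt_succ_of_le (Nat.sub_le n j)))
      have h3 : (0:ℝ) < (n:ℝ) + 1 := by positivity
      positivity

/-- key summation step -/
lemma Astep (hμ1 : 1 ≤ μ 1) (F : ℕ → ℝ) (n : ℕ) (hmono : ∀ i, i < n → F i ≤ F (i + 1)) :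
    (∑ i ∈ Finset.range n, (sigmaA μ (n - i) : ℝ) * F i) + (F n - F 0)
        + (sigmaA μ (n + 1) : ℝ) * F 0
      ≤ ∑ i ∈ Finset.range (n + 1), (sigmaA μ (n + 1 - i) : ℝ) * F i := by
  rw [Finset.sum_range_succ' (fun i => (sigmaA μ (n + 1 - i) : ℝ) * F i) n]
  simp only [Nat.sub_zero]
  have key : ∀ i ∈ Finset.range n,
      (sigmaA μ (n - i) : ℝ) * F i + (F (i + 1) - F i)
        ≤ (sigmaA μ (n + 1 - (i + 1)) : ℝ) * F (i + 1) := by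
    intro i hi
    have hi' : i < n := Finset.mem_range.mp hi
    have h1 : n + 1 - (i + 1) = n - i := by omega
    rw [h1]
    have hs : (1 : ℝ) ≤ (sigmaA μ (n - i) : ℝ) := sigma_one_le' μ hμ1 (by omega)
    have hm : F i ≤ F (i + 1) := hmono i hi'
    nlinarith
  have := Finset.sum_le_sum key
  rw [Finset.sum_add_distrib, Finset.sum_range_sub (fun i => F i)] at this
  linarith

lemma f_mono (hμ1 : 1 ≤ μ 1) {x : ℝ} (hx : 1 ≤ x) : ∀ n, fA μ n x ≤ fA μ (n + 1) x := by
  have hx0 : (0:ℝ) ≤ x := by linarith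
  intro n
  induction n using Nat.strong_induction_on with
  | _ n ih =>
    have hA : (∑ i ∈ Finset.range n, (sigmaA μ (n - i) : ℝ) * fA μ i x)
        + (fA μ n x - fA μ 0 x) + (sigmaA μ (n + 1) : ℝ) * fA μ 0 x
        ≤ ∑ i ∈ Finset.range (n + 1), (sigmaA μ (n + 1 - i) : ℝ) * fA μ i x :=
      Astep μ hμ1 _ n (fun i hi => ih i hi)
    have h0 : fA μ 0 x = 1 := fA_zero μ x
    have hs : (1 : ℝ) ≤ (sigmaA μ (n + 1) : ℝ) := sigma_one_le' μ hμ1 (by omega)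
    have hfn : 0 ≤ fA μ n x := f_nonneg μ hx0 n
    have e1 : (n : ℝ) * fA μ n x = x * ∑ i ∈ Finset.range n, (sigmaA μ (n - i) : ℝ) * fA μ i x :=
      fA_eq μ n x
    have e2 : ((n : ℕ) + 1 : ℝ) * fA μ (n + 1) x
        = x * ∑ i ∈ Finset.range (n + 1), (sigmaA μ (n + 1 - i) : ℝ) * fA μ i x := by
      have := fA_eq μ (n + 1) x
      push_cast at this ⊢
      exact this
    -- x * A_{n+1} ≥ x * (A_n + f_n)
    have h4 : x * ((∑ i ∈ Finset.range n, (sigmaA μ (n - i) : ℝ) * fA μ i x) + fA μ n x)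
        ≤ x * ∑ i ∈ Finset.range (n + 1), (sigmaA μ (n + 1 - i) : ℝ) * fA μ i x := by
      apply mul_le_mul_of_nonneg_left _ hx0
      rw [h0] at hA
      linarith
    have h5 : ((n : ℝ) + 1) * fA μ n x ≤ ((n : ℝ) + 1) * fA μ (n + 1) x := by
      push_cast at e2
      nlinarith
    have hpos : (0:ℝ) < (n : ℝ) + 1 := by positivity
    exact le_of_mul_le_mul_left h5 hpos

lemma f_one_le (hμ1 : 1 ≤ μ 1) {x : ℝ} (hx : 1 ≤ x) : ∀ n, 1 ≤ fA μ n x := by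
  intro n
  induction n with
  | zero => rw [fA_zero]
  | succ n ih => exact le_trans ih (f_mono μ hμ1 hx n)

lemma gA_one (x : ℝ) : gA μ 1 x = (sigmaA μ 1 : ℝ) := by
  rw [gA]
  simp [fA_zero, gA]

lemma g_lt (hμ1 : 1 ≤ μ 1) {x : ℝ} (hx : 1 ≤ x) : ∀ n, gA μ n x < gA μ (n + 1) x := by
  have hx0 : (0:ℝ) ≤ x := by linarith
  intro n
  induction n using Nat.strong_induction_on with
  | _ n ih =>
    match n with
    | 0 =>
      rw [gA, gA_one]
      have := sigma_one_le' μ hμ1 (le_refl 1)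
      linarith
    | m + 1 =>
      -- show gA (m+1) < gA (m+2)
      have hmonog : ∀ i, i < m + 1 → gA μ i x ≤ gA μ (i + 1) x :=
        fun i hi => le_of_lt (ih i hi)
      have hA : (∑ i ∈ Finset.range (m+1), (sigmaA μ (m+1 - i) : ℝ) * fA μ i x)
          + (fA μ (m+1) x - fA μ 0 x) + (sigmaA μ (m+2) : ℝ) * fA μ 0 x
          ≤ ∑ i ∈ Finset.range (m+2), (sigmaA μ (m+2 - i) : ℝ) * fA μ i x := by
        exact Astep μ hμ1 (fun i => fA μ i x) (m+1) (fun i _ => f_mono μ hμ1 hx i)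
      have hB : (∑ i ∈ Finset.range (m+1), (sigmaA μ (m+1 - i) : ℝ) * gA μ i x)
          + (gA μ (m+1) x - gA μ 0 x) + (sigmaA μ (m+2) : ℝ) * gA μ 0 x
          ≤ ∑ i ∈ Finset.range (m+2), (sigmaA μ (m+2 - i) : ℝ) * gA μ i x := by
        exact Astep μ hμ1 (fun i => gA μ i x) (m+1) hmonog
      have hg0 : gA μ 0 x = 0 := by rw [gA]
      have hf0 : fA μ 0 x = 1 := fA_zero μ x
      have e1 : ((m:ℝ) + 1) * gA μ (m+1) x
          = (∑ i ∈ Finset.range (m+1), (sigmaA μ (m+1 - i) : ℝ) * fA μ i x)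
            + x * ∑ i ∈ Finset.range (m+1), (sigmaA μ (m+1 - i) : ℝ) * gA μ i x := by
        have := gA_eq μ (m+1) x; push_cast at this ⊢; exact this
      have e2 : ((m:ℝ) + 2) * gA μ (m+2) x
          = (∑ i ∈ Finset.range (m+2), (sigmaA μ (m+2 - i) : ℝ) * fA μ i x)
            + x * ∑ i ∈ Finset.range (m+2), (sigmaA μ (m+2 - i) : ℝ) * gA μ i x := by
        have := gA_eq μ (m+2) x; push_cast at this ⊢; exact this
      have hs : (1 : ℝ) ≤ (sigmaA μ (m+2) : ℝ) := sigma_one_le' μ hμ1 (by omega)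
      have hf : 1 ≤ fA μ (m+1) x := f_one_le μ hμ1 hx (m+1)
      have hg : 0 ≤ gA μ (m+1) x := g_nonneg μ hx0 (m+1)
      rw [hf0] at hA
      rw [hg0] at hB
      -- x * B_{m+2} ≥ x * (B_{m+1} + g_{m+1})
      have hxB : x * ((∑ i ∈ Finset.range (m+1), (sigmaA μ (m+1 - i) : ℝ) * gA μ i x)
            + gA μ (m+1) x)
          ≤ x * ∑ i ∈ Finset.range (m+2), (sigmaA μ (m+2 - i) : ℝ) * gA μ i x := by
        apply mul_le_mul_of_nonneg_left _ hx0
        linarith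
      have hxg : gA μ (m+1) x ≤ x * gA μ (m+1) x := by nlinarith
      have key : ((m:ℝ) + 2) * gA μ (m+1) x + 1 ≤ ((m:ℝ) + 2) * gA μ (m+2) x := by
        nlinarith [hA, hxB, e1, e2, hs, hf, hxg]
      have hpos : (0:ℝ) < (m:ℝ) + 2 := by positivity
      have : ((m:ℝ) + 2) * gA μ (m+1) x < ((m:ℝ) + 2) * gA μ (m+2) x := by linarith
      exact lt_of_mul_lt_mul_left this (le_of_lt hpos)

lemma g_one_le (hμ1 : 1 ≤ μ 1) {x : ℝ} (hx : 1 ≤ x) : ∀ n, 1 ≤ n → 1 ≤ gA μ n x := by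
  intro n hn
  induction n with
  | zero => omega
  | succ n ih =>
    cases Nat.eq_or_lt_of_le hn with
    | inl h =>
      have : n = 0 := by omega
      subst this
      rw [gA_one]
      exact sigma_one_le' μ hμ1 le_rfl
    | inr h =>
      have hn' : 1 ≤ n := by omega
      exact le_trans (ih hn') (le_of_lt (g_lt μ hμ1 hx n))

lemma hasDeriv (n : ℕ) (x : ℝ) : HasDerivAt (fA μ n) (gA μ n x) x := by
  induction n using Nat.strong_induction_on generalizing x with
  | _ n ih =>
    match n with
    | 0 =>
      have h : fA μ 0 = fun _ : ℝ => (1:ℝ) := funext fun y => fA_zero μ y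
      rw [gA, h]
      exact hasDerivAt_const x 1
    | n + 1 =>
      have hS : HasDerivAt
          (fun y => ∑ j ∈ Finset.range (n + 1), (sigmaA μ (j + 1) : ℝ) * fA μ (n - j) y)
          (∑ j ∈ Finset.range (n + 1), (sigmaA μ (j + 1) : ℝ) * gA μ (n - j) x) x := by
        apply HasDerivAt.fun_sum
        intro j hj
        exact (ih (n - j) (Nat.lt_succ_of_le (Nat.sub_le n j)) x).const_mul _
      have hc : HasDerivAt (fun y : ℝ => y / ((n:ℝ) + 1)) (1 / ((n:ℝ) + 1)) x :=
        (hasDerivAt_id x).div_const _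
      have h := hc.fun_mul hS
      have hfun : fA μ (n + 1)
          = fun y => y / ((n:ℝ) + 1) * ∑ j ∈ Finset.range (n + 1),
              (sigmaA μ (j + 1) : ℝ) * fA μ (n - j) y := by
        funext y
        rw [fA]
      rw [hfun, gA]
      exact h.congr_deriv (by ring)

end StmtAux

/-- If 1 is in A then for every n >= 1 and real x >= 1, 1 <= f_{A,n}'(x) < f_{A,n+1}'(x). -/
theorem stmt_5 (μ : ℕ → ℕ) (hμ0 : μ 0 = 0) (hμ1 : 1 ≤ μ 1) (n : ℕ) (hn : 1 ≤ n) (x : ℝ) (hx : 1 ≤ x) :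
    1 ≤ deriv (fA μ n) x ∧ deriv (fA μ n) x < deriv (fA μ (n + 1)) x := by
  have hd : ∀ m, deriv (fA μ m) x = StmtAux.gA μ m x :=
    fun m => (StmtAux.hasDeriv μ m x).deriv
  rw [hd, hd]
  exact ⟨StmtAux.g_one_le μ hμ1 hx n hn, StmtAux.g_lt μ hμ1 hx n⟩
end

section
/- Let A be a set of positive integers with 1 ∈ A. Then f_{A,3}(x) equals x(x+1)(x+8)/6 if both 2,3 ∈ A; x(x²+9x+2)/6 if 2 ∈ A and 3 ∉ A; x(x²+3x+8)/6 if 2 ∉ A and 3 ∈ A; and x(x+1)(x+2)/6 if 2,3 ∉ A. -/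
open scoped Classical

/-- For a set A of positive integers with 1 in A, the four cases for f_{A,3}(x) according to whether 2 and 3 belong to A. -/
theorem stmt_9 (A : Set ℕ) (h0 : 0 ∉ A) (h1 : 1 ∈ A) (x : ℝ) :
    (2 ∈ A → 3 ∈ A → fS A 3 x = x * (x + 1) * (x + 8) / 6) ∧
    (2 ∈ A → 3 ∉ A → fS A 3 x = x * (x ^ 2 + 9 * x + 2) / 6) ∧
    (2 ∉ A → 3 ∈ A → fS A 3 x = x * (x ^ 2 + 3 * x + 8) / 6) ∧
    (2 ∉ A → 3 ∉ A → fS A 3 x = x * (x + 1) * (x + 2) / 6) := by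
  have d1 : Nat.divisors 1 = {1} := rfl
  have d2 : Nat.divisors 2 = {1, 2} := rfl
  have d3 : Nat.divisors 3 = {1, 3} := rfl
  have key : fS A 3 x = x / 3 * ((sigmaA (fun a => if a ∈ A then 1 else 0) 1 : ℝ) *
      (x / 2 * ((sigmaA (fun a => if a ∈ A then 1 else 0) 1 : ℝ) * (x / 1 *
        ((sigmaA (fun a => if a ∈ A then 1 else 0) 1 : ℝ) * 1)) +
        (sigmaA (fun a => if a ∈ A then 1 else 0) 2 : ℝ) * 1)) +
      ((sigmaA (fun a => if a ∈ A then 1 else 0) 2 : ℝ) * (x / 1 *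
        ((sigmaA (fun a => if a ∈ A then 1 else 0) 1 : ℝ) * 1)) +
       (sigmaA (fun a => if a ∈ A then 1 else 0) 3 : ℝ) * 1)) := by
    show fA _ 3 x = _
    simp [fA, Finset.sum_range_succ]
    ring
  rw [key]
  simp only [sigmaA, d1, d2, d3, Finset.sum_insert, Finset.mem_singleton, Finset.sum_singleton]
  norm_num [Finset.sum_insert, h1]
  refine ⟨?_, ?_, ?_, ?_⟩ <;> intro ha hb <;> simp [ha, hb] <;> ring
end

section
/- For every set A ⊆ ℕ with 1 ∈ A and all positive integers a, b with (a,b) ≠ (1,1), the Bessenrodt–Ono inequality f_{A,a}(3)·f_{A,b}(3) > f_{A,a+b}(3) holds; moreover f_{A,1}(3)² ≥ f_{A,2}(3) with equality if and only if 2 ∈ A. -/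
open scoped Classical

namespace BO
open Finset

lemma fA_zero (μ : ℕ → ℕ) (x : ℝ) : fA μ 0 x = 1 := by rw [fA]

lemma fA_succ (μ : ℕ → ℕ) (n : ℕ) (x : ℝ) : fA μ (n+1) x
    = x/(n+1) * ∑ j ∈ Finset.range (n+1), (sigmaA μ (j+1):ℝ) * fA μ (n-j) x := by
  rw [fA]

lemma fA_rec (μ : ℕ → ℕ) (n : ℕ) (x : ℝ) :
    ((n:ℝ)+1) * fA μ (n+1) x = x * ∑ j ∈ Finset.range (n+1), (sigmaA μ (j+1):ℝ) * fA μ (n-j) x := by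
  rw [fA_succ]
  have h : ((n:ℝ)+1) ≠ 0 := by positivity
  field_simp

lemma fA_nonneg (μ : ℕ → ℕ) {x : ℝ} (hx : 0 ≤ x) : ∀ n, 0 ≤ fA μ n x := by
  intro n
  induction n using Nat.strong_induction_on with
  | _ n ih =>
    match n with
    | 0 => rw [fA_zero]; norm_num
    | n+1 =>
      rw [fA_succ]
      apply mul_nonneg (by positivity)
      apply Finset.sum_nonneg
      intro j hj
      exact mul_nonneg (by positivity) (ih (n-j) (Nat.lt_succ_of_le (Nat.sub_le n j)))

lemma sigmaA_add (μ ν : ℕ → ℕ) (j : ℕ) :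
    sigmaA (fun d => μ d + ν d) j = sigmaA μ j + sigmaA ν j := by
  simp [sigmaA, mul_add, Finset.sum_add_distrib]

lemma sigmaA_one (μ : ℕ → ℕ) : sigmaA μ 1 = μ 1 := by
  simp [sigmaA]

lemma sigmaA_two (μ : ℕ → ℕ) : sigmaA μ 2 = μ 1 + 2 * μ 2 := by
  have h2 : Nat.divisors 2 = {1, 2} := by decide
  simp [sigmaA, h2]

lemma sigmaA_single (d j : ℕ) (hj : j ≠ 0) :
    sigmaA (fun e => if e = d then 1 else 0) j = if d ∣ j then d else 0 := by
  unfold sigmaA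
  rw [Finset.sum_congr rfl (fun e _ => by rw [mul_ite, mul_one, mul_zero])]
  rw [Finset.sum_ite_eq' (Nat.divisors j) d (fun e => e)]
  simp [Nat.mem_divisors, hj]

noncomputable def Bq (k : ℕ) : ℝ := ((k:ℝ)+1)*((k:ℝ)+2)/2

lemma Bq_nonneg (k : ℕ) : 0 ≤ Bq k := by unfold Bq; positivity

lemma Bq_zero : Bq 0 = 1 := by norm_num [Bq]
lemma Bq_one : Bq 1 = 3 := by norm_num [Bq]

lemma Bq_mono {k l : ℕ} (h : k ≤ l) : Bq k ≤ Bq l := by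
  unfold Bq
  have : (k:ℝ) ≤ l := by exact_mod_cast h
  nlinarith [Nat.cast_nonneg (α := ℝ) k]

lemma Bq_submul (i j : ℕ) : Bq (i+j) ≤ Bq i * Bq j := by
  unfold Bq
  push_cast
  nlinarith [Nat.cast_nonneg (α := ℝ) i, Nat.cast_nonneg (α := ℝ) j,
    mul_nonneg (Nat.cast_nonneg (α := ℝ) i) (Nat.cast_nonneg (α := ℝ) j)]

lemma Bq_succ_le (k : ℕ) : Bq (k+1) ≤ 3 * Bq k := by
  unfold Bq
  push_cast
  nlinarith [Nat.cast_nonneg (α := ℝ) k]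

lemma sum_Bq (m : ℕ) : ∑ u ∈ Finset.range m, Bq u = (m:ℝ)*((m:ℝ)+1)*((m:ℝ)+2)/6 := by
  induction m with
  | zero => simp
  | succ m ih =>
    rw [Finset.sum_range_succ, ih]
    unfold Bq
    push_cast
    ring

lemma sum_range_ite_le {M N : ℕ} (h : M + 1 ≤ N) (t : ℕ → ℝ) :
    ∑ j ∈ Finset.range N, (if j ≤ M then t j else 0) = ∑ j ∈ Finset.range (M+1), t j := by
  rw [← Finset.sum_filter]
  congr 1
  ext j
  simp only [Finset.mem_filter, Finset.mem_range]
  omega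

lemma RX (d N : ℕ) (hd : 0 < d) (g : ℕ → ℝ) :
    ∑ m ∈ Finset.range (N+1), (if d ∣ m then g m else 0) = ∑ k ∈ Finset.range (N/d+1), g (k*d) := by
  rw [← Finset.sum_filter]
  apply Finset.sum_nbij' (i := fun m => m/d) (j := fun k => k*d)
  · intro m hm
    simp only [Finset.mem_filter, Finset.mem_range] at hm
    simp only [Finset.mem_range]
    have := Nat.div_le_div_right (c := d) (Nat.lt_succ_iff.1 hm.1)
    omega
  · intro k hk
    simp only [Finset.mem_range] at hk
    simp only [Finset.mem_filter, Finset.mem_range]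
    constructor
    · have : k ≤ N/d := by omega
      have := (Nat.le_div_iff_mul_le hd).1 this
      omega
    · exact ⟨k, mul_comm k d⟩
  · intro m hm
    simp only [Finset.mem_filter] at hm
    exact Nat.div_mul_cancel hm.2
  · intro k hk
    exact Nat.mul_div_cancel k hd
  · intro m hm
    simp only [Finset.mem_filter] at hm
    rw [Nat.div_mul_cancel hm.2]


lemma tri_swap (n : ℕ) (t : ℕ → ℕ → ℝ) :
    ∑ m ∈ Finset.range (n+1), ∑ j ∈ Finset.range (m+1), t j m
      = ∑ j ∈ Finset.range (n+1), ∑ m ∈ Finset.Ico j (n+1), t j m := by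
  have h1 : ∀ m ∈ Finset.range (n+1), ∑ j ∈ Finset.range (m+1), t j m
      = ∑ j ∈ Finset.range (n+1), if j ≤ m then t j m else 0 := by
    intro m hm
    simp only [Finset.mem_range] at hm
    rw [← Finset.sum_filter]
    congr 1
    ext j
    simp only [Finset.mem_filter, Finset.mem_range]
    omega
  rw [Finset.sum_congr rfl h1, Finset.sum_comm]
  apply Finset.sum_congr rfl
  intro j hj
  rw [← Finset.sum_filter]
  congr 1
  ext m
  simp only [Finset.mem_filter, Finset.mem_range, Finset.mem_Ico]
  omega

lemma conv_symm (F G : ℕ → ℝ) (m : ℕ) :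
    ∑ k ∈ Finset.range (m+1), F k * G (m-k) = ∑ k ∈ Finset.range (m+1), G k * F (m-k) := by
  rw [← Finset.sum_range_reflect (fun k => F k * G (m-k)) (m+1)]
  apply Finset.sum_congr rfl
  intro j hj
  simp only [Finset.mem_range] at hj
  have h1 : m + 1 - 1 - j = m - j := by omega
  have h2 : m - (m - j) = j := by omega
  rw [h1, h2, mul_comm]

lemma key (μ ν : ℕ → ℕ) (x : ℝ) (n : ℕ) :
    ∑ k ∈ Finset.range (n+2), (k:ℝ) * (fA μ k x * fA ν (n+1-k) x)
      = x * ∑ j ∈ Finset.range (n+1), (sigmaA μ (j+1):ℝ) *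
          ∑ l ∈ Finset.range (n-j+1), fA μ l x * fA ν (n-j-l) x := by
  rw [Finset.sum_range_succ' (fun k => (k:ℝ) * (fA μ k x * fA ν (n+1-k) x)) (n+1)]
  simp only [Nat.cast_zero, zero_mul, add_zero]
  have e1 : ∀ m ∈ Finset.range (n+1), ((m+1:ℕ):ℝ) * (fA μ (m+1) x * fA ν (n+1-(m+1)) x)
      = ∑ j ∈ Finset.range (m+1), x * ((sigmaA μ (j+1):ℝ) * fA μ (m-j) x * fA ν (n-m) x) := by
    intro m hm
    have h2 : n+1-(m+1) = n-m := by omega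
    rw [h2]
    have h3 : ((m+1:ℕ):ℝ) * (fA μ (m+1) x * fA ν (n-m) x)
        = (((m:ℝ)+1) * fA μ (m+1) x) * fA ν (n-m) x := by push_cast; ring
    rw [h3, fA_rec, mul_assoc, Finset.sum_mul, Finset.mul_sum]
  rw [Finset.sum_congr rfl e1, tri_swap n (fun j m => x * ((sigmaA μ (j+1):ℝ) * fA μ (m-j) x * fA ν (n-m) x))]
  rw [Finset.mul_sum]
  apply Finset.sum_congr rfl
  intro j hj
  simp only [Finset.mem_range] at hj
  rw [Finset.sum_Ico_eq_sum_range]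
  have h4 : n + 1 - j = n - j + 1 := by omega
  rw [h4, Finset.mul_sum, Finset.mul_sum]
  apply Finset.sum_congr rfl
  intro i hi
  simp only [Finset.mem_range] at hi
  have h5 : j + i - j = i := by omega
  have h6 : n - (j + i) = n - j - i := by omega
  rw [h5, h6]
  ring

lemma reflect_weight (H : ℕ → ℕ → ℝ) (N : ℕ) :
    ∑ k ∈ Finset.range (N+1), ((N-k:ℕ):ℝ) * H k (N-k)
      = ∑ k ∈ Finset.range (N+1), (k:ℝ) * H (N-k) k := by
  rw [← Finset.sum_range_reflect (fun k => ((N-k:ℕ):ℝ) * H k (N-k)) (N+1)]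
  apply Finset.sum_congr rfl
  intro j hj
  simp only [Finset.mem_range] at hj
  have h1 : N+1-1-j = N-j := by omega
  have h2 : N-(N-j) = j := by omega
  rw [h1, h2]

lemma conv (μ ν : ℕ → ℕ) (x : ℝ) : ∀ n,
    fA (fun e => μ e + ν e) n x = ∑ k ∈ Finset.range (n+1), fA μ k x * fA ν (n-k) x := by
  intro n
  induction n using Nat.strong_induction_on with
  | _ n ih =>
    match n with
    | 0 => simp [fA_zero]
    | Nat.succ n =>
      have hcancel : ((n:ℝ)+1) ≠ 0 := by positivity
      apply mul_left_cancel₀ hcancel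
      rw [fA_rec]
      have hC : ∀ j ∈ Finset.range (n+1), (sigmaA (fun e => μ e + ν e) (j+1):ℝ) * fA (fun e => μ e + ν e) (n-j) x
          = ((sigmaA μ (j+1):ℝ) + (sigmaA ν (j+1):ℝ)) * ∑ k ∈ Finset.range (n-j+1), fA μ k x * fA ν (n-j-k) x := by
        intro j hj
        rw [ih (n-j) (by omega), sigmaA_add]
        push_cast
        ring
      rw [Finset.sum_congr rfl hC]
      -- now compute (n+1) * C(n+1)
      have expand : ((n:ℝ)+1) * ∑ k ∈ Finset.range (n+1+1), fA μ k x * fA ν (n+1-k) x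
          = (∑ k ∈ Finset.range (n+2), (k:ℝ) * (fA μ k x * fA ν (n+1-k) x))
            + ∑ k ∈ Finset.range (n+2), ((n+1-k:ℕ):ℝ) * (fA μ k x * fA ν (n+1-k) x) := by
        rw [Finset.mul_sum, ← Finset.sum_add_distrib]
        apply Finset.sum_congr rfl
        intro k hk
        simp only [Finset.mem_range] at hk
        have h1 : ((n+1-k:ℕ):ℝ) = ((n:ℝ)+1) - (k:ℝ) := by
          have : (k:ℕ) ≤ n+1 := by omega
          push_cast [Nat.cast_sub this]
          ring
        rw [h1]
        ring
      rw [expand]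
      have A2eq : ∑ k ∈ Finset.range (n+2), ((n+1-k:ℕ):ℝ) * (fA μ k x * fA ν (n+1-k) x)
          = ∑ k ∈ Finset.range (n+2), (k:ℝ) * (fA ν k x * fA μ (n+1-k) x) := by
        have := reflect_weight (fun k l => fA μ k x * fA ν l x) (n+1)
        rw [this]
        apply Finset.sum_congr rfl
        intro k hk
        rw [mul_comm (fA μ (n+1-k) x) (fA ν k x)]
      rw [A2eq, key μ ν x n, key ν μ x n]
      have swap2 : ∀ j ∈ Finset.range (n+1), (sigmaA ν (j+1):ℝ) * ∑ l ∈ Finset.range (n-j+1), fA ν l x * fA μ (n-j-l) x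
          = (sigmaA ν (j+1):ℝ) * ∑ l ∈ Finset.range (n-j+1), fA μ l x * fA ν (n-j-l) x := by
        intro j hj
        have h7 : n - j + 1 = (n-j) + 1 := rfl
        rw [h7, conv_symm (fun k => fA ν k x) (fun k => fA μ k x) (n-j)]
      rw [Finset.sum_congr rfl swap2]
      rw [← mul_add, ← Finset.sum_add_distrib]
      congr 1
      apply Finset.sum_congr rfl
      intro j hj
      ring

-- single element lemma
lemma fA_single (d : ℕ) (hd : 1 ≤ d) : ∀ n,
    fA (fun e => if e = d then 1 else 0) n 3 = if d ∣ n then Bq (n/d) else 0 := by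
  intro n
  induction n using Nat.strong_induction_on with
  | _ n ih =>
    match n with
    | 0 => simp [fA_zero, Bq_zero]
    | Nat.succ n =>
      have hdpos : 0 < d := hd
      have hrec := fA_rec (fun e => if e = d then 1 else 0) n 3
      have hσ : ∀ j ∈ Finset.range (n+1),
          (sigmaA (fun e => if e = d then 1 else 0) (j+1) : ℝ) * fA (fun e => if e = d then 1 else 0) (n-j) 3
          = (if d ∣ (j+1) then (d:ℝ) * fA (fun e => if e = d then 1 else 0) (n+1-(j+1)) 3 else 0) := by
        intro j hj
        rw [sigmaA_single d (j+1) (by omega)]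
        have h0 : n + 1 - (j+1) = n - j := by omega
        rw [h0]
        split <;> simp_all
      rw [Finset.sum_congr rfl hσ] at hrec
      have hshift := Finset.sum_range_succ'
        (fun m => if d ∣ m then (d:ℝ) * fA (fun e => if e = d then 1 else 0) (n+1-m) 3 else 0) (n+1)
      simp only [dvd_zero, if_true, Nat.sub_zero] at hshift
      rw [RX d (n+1) hdpos] at hshift
      -- hshift : ∑ k ∈ range ((n+1)/d+1), d * f (n+1-k*d) = (∑ j ∈ range (n+1), ite ...) + d * f (n+1)
      rw [Finset.sum_range_succ'
        (fun k => (d:ℝ) * fA (fun e => if e = d then 1 else 0) (n+1-k*d) 3) ((n+1)/d)] at hshift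
      simp only [Nat.zero_mul, Nat.sub_zero] at hshift
      have hsum : (∑ j ∈ Finset.range (n+1),
          (if d ∣ (j+1) then (d:ℝ) * fA (fun e => if e = d then 1 else 0) (n+1-(j+1)) 3 else 0))
          = ∑ k ∈ Finset.range ((n+1)/d), (d:ℝ) * fA (fun e => if e = d then 1 else 0) (n+1-(k+1)*d) 3 := by
        linarith [hshift]
      rw [hsum] at hrec
      have hIH : ∀ k ∈ Finset.range ((n+1)/d), (d:ℝ) * fA (fun e => if e = d then 1 else 0) (n+1-(k+1)*d) 3
          = (d:ℝ) * (if d ∣ (n+1-(k+1)*d) then Bq ((n+1-(k+1)*d)/d) else 0) := by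
        intro k hk
        simp only [Finset.mem_range] at hk
        have hle : (k+1) * d ≤ n+1 := (Nat.le_div_iff_mul_le hdpos).1 (by omega)
        rw [ih (n+1-(k+1)*d) (by have h9 : 0 < (k+1)*d := Nat.mul_pos (by omega) hdpos; omega)]
      rw [Finset.sum_congr rfl hIH] at hrec
      by_cases hdvd : d ∣ (n+1)
      · obtain ⟨M, hM⟩ := hdvd
        have hMpos : 1 ≤ M := by
          rcases Nat.eq_zero_or_pos M with h | h
          · rw [h, mul_zero] at hM; omega
          · exact h
        have hdiv : (n+1)/d = M := by rw [hM]; exact Nat.mul_div_cancel_left M hdpos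
        have hterm : ∀ k ∈ Finset.range ((n+1)/d),
            (d:ℝ) * (if d ∣ (n+1-(k+1)*d) then Bq ((n+1-(k+1)*d)/d) else 0)
            = (d:ℝ) * Bq (M-1-k) := by
          intro k hk
          simp only [Finset.mem_range, hdiv] at hk
          have h1 : n+1-(k+1)*d = (M-1-k)*d := by
            rw [hM]
            have hk1 : k+1 ≤ M := by omega
            calc d*M - (k+1)*d = (M-(k+1))*d := by rw [Nat.sub_mul, mul_comm]
            _ = (M-1-k)*d := by congr 1; omega
          rw [h1]
          have h2 : d ∣ (M-1-k)*d := ⟨M-1-k, mul_comm _ _⟩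
          rw [if_pos h2, Nat.mul_div_cancel _ hdpos]
        rw [Finset.sum_congr rfl hterm, ← Finset.mul_sum, hdiv] at hrec
        rw [Finset.sum_range_reflect (fun u => Bq u) M] at hrec
        rw [sum_Bq] at hrec
        rw [if_pos ⟨M, hM⟩, hdiv]
        have hn1 : ((n:ℝ)+1) = (d:ℝ) * (M:ℝ) := by
          have h5 : ((n+1:ℕ):ℝ) = ((d*M:ℕ):ℝ) := by rw [hM]
          push_cast at h5
          linarith
        have hdR : (0:ℝ) < d := by exact_mod_cast hdpos
        have hMR : (1:ℝ) ≤ M := by exact_mod_cast hMpos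
        rw [hn1] at hrec
        unfold Bq
        nlinarith [hrec]
      · rw [if_neg hdvd]
        have hterm : ∀ k ∈ Finset.range ((n+1)/d),
            (d:ℝ) * (if d ∣ (n+1-(k+1)*d) then Bq ((n+1-(k+1)*d)/d) else 0) = 0 := by
          intro k hk
          simp only [Finset.mem_range] at hk
          have hle : (k+1) * d ≤ n+1 := (Nat.le_div_iff_mul_le hdpos).1 (by omega)
          have hnd : ¬ d ∣ (n+1-(k+1)*d) := by
            intro hcon
            apply hdvd
            have h3 : n+1 = (n+1-(k+1)*d) + (k+1)*d := by omega
            rw [h3]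
            exact Nat.dvd_add hcon ⟨k+1, mul_comm _ _⟩
          rw [if_neg hnd, mul_zero]
        rw [Finset.sum_congr rfl hterm] at hrec
        simp only [Finset.sum_const_zero] at hrec
        have hn1 : (0:ℝ) < (n:ℝ)+1 := by positivity
        nlinarith [hrec]

noncomputable def pf (F : Finset ℕ) (n : ℕ) : ℝ := fA (fun e => if e ∈ F then 1 else 0) n 3

lemma pf_zero (F : Finset ℕ) : pf F 0 = 1 := fA_zero _ _

lemma pf_nonneg (F : Finset ℕ) (n : ℕ) : 0 ≤ pf F n := fA_nonneg _ (by norm_num) n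

lemma pf_insert (F : Finset ℕ) (d : ℕ) (hd : 1 ≤ d) (hdF : d ∉ F) (n : ℕ) :
    pf (insert d F) n = ∑ k ∈ Finset.range (n/d+1), Bq k * pf F (n - k*d) := by
  have hμ : (fun e => if e ∈ insert d F then 1 else 0)
      = (fun e => (if e ∈ F then 1 else 0) + (if e = d then 1 else 0)) := by
    funext e
    by_cases he : e = d
    · subst he; simp [hdF]
    · simp [Finset.mem_insert, he]
  unfold pf
  rw [hμ, conv]
  have h1 : ∀ k ∈ Finset.range (n+1),
      fA (fun e => if e ∈ F then 1 else 0) k 3 * fA (fun e => if e = d then 1 else 0) (n-k) 3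
      = (if d ∣ (n-k) then fA (fun e => if e ∈ F then 1 else 0) k 3 * Bq ((n-k)/d) else 0) := by
    intro k hk
    rw [fA_single d hd]
    split <;> simp
  rw [Finset.sum_congr rfl h1]
  rw [← Finset.sum_range_reflect
    (fun k => if d ∣ (n-k) then fA (fun e => if e ∈ F then 1 else 0) k 3 * Bq ((n-k)/d) else 0) (n+1)]
  have h2 : ∀ m ∈ Finset.range (n+1),
      (if d ∣ (n-(n+1-1-m)) then fA (fun e => if e ∈ F then 1 else 0) (n+1-1-m) 3 * Bq ((n-(n+1-1-m))/d) else 0)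
      = (if d ∣ m then fA (fun e => if e ∈ F then 1 else 0) (n-m) 3 * Bq (m/d) else 0) := by
    intro m hm
    simp only [Finset.mem_range] at hm
    have h3 : n+1-1-m = n-m := by omega
    have h4 : n-(n-m) = m := by omega
    rw [h3, h4]
  rw [Finset.sum_congr rfl h2, RX d n hd]
  apply Finset.sum_congr rfl
  intro k hk
  rw [Nat.mul_div_cancel k hd]
  ring

lemma pf_singleton (n : ℕ) : pf {1} n = Bq n := by
  unfold pf
  have hμ : (fun e => if e ∈ ({1} : Finset ℕ) then 1 else 0) = (fun e => if e = 1 then 1 else 0) := by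
    funext e; simp
  rw [hμ, fA_single 1 le_rfl n, if_pos (one_dvd n), Nat.div_one]

lemma pf_mono_succ : ∀ (G : Finset ℕ), (∀ e ∈ G, 2 ≤ e) → ∀ n, pf (insert 1 G) n ≤ pf (insert 1 G) (n+1) := by
  intro G
  induction G using Finset.induction_on with
  | empty =>
    intro _ n
    have h1 : (insert 1 (∅:Finset ℕ)) = {1} := rfl
    rw [h1, pf_singleton, pf_singleton]
    exact Bq_mono (by omega)
  | @insert d G hdG ih =>
    intro hval n
    have hd2 : 2 ≤ d := hval d (Finset.mem_insert_self d G)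
    have hG : ∀ e ∈ G, 2 ≤ e := fun e he => hval e (Finset.mem_insert_of_mem he)
    have hcomm : insert 1 (insert d G) = insert d (insert 1 G) := by
      ext x; simp only [Finset.mem_insert]; tauto
    have hdF : d ∉ insert 1 G := by
      simp only [Finset.mem_insert]
      push_neg
      exact ⟨by omega, hdG⟩
    rw [hcomm, pf_insert _ d (by omega) hdF, pf_insert _ d (by omega) hdF]
    have hstep : ∑ k ∈ Finset.range (n/d+1), Bq k * pf (insert 1 G) (n - k*d)
        ≤ ∑ k ∈ Finset.range (n/d+1), Bq k * pf (insert 1 G) (n+1 - k*d) := by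
      apply Finset.sum_le_sum
      intro k hk
      simp only [Finset.mem_range] at hk
      have hkd : k*d ≤ n := by
        have := (Nat.le_div_iff_mul_le (by omega : 0 < d)).1 (by omega : k ≤ n/d)
        omega
      have h5 : n+1-k*d = (n-k*d)+1 := by omega
      rw [h5]
      exact mul_le_mul_of_nonneg_left (ih hG (n-k*d)) (Bq_nonneg k)
    apply le_trans hstep
    apply Finset.sum_le_sum_of_subset_of_nonneg
    · apply Finset.range_subset_range.2
      have hdd : n/d ≤ (n+1)/d := Nat.div_le_div_right (Nat.le_succ n)
      omega
    · intro k _ _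
      exact mul_nonneg (Bq_nonneg k) (pf_nonneg _ _)

lemma pf_mono (G : Finset ℕ) (hG : ∀ e ∈ G, 2 ≤ e) : ∀ {m n : ℕ}, m ≤ n → pf (insert 1 G) m ≤ pf (insert 1 G) n := by
  have := monotone_nat_of_le_succ (pf_mono_succ G hG)
  intro m n h
  exact this h

lemma pf_ge_one (G : Finset ℕ) (hG : ∀ e ∈ G, 2 ≤ e) (n : ℕ) : 1 ≤ pf (insert 1 G) n := by
  have h0 := pf_mono G hG (Nat.zero_le n)
  rw [pf_zero] at h0
  exact h0

lemma fA_one (μ : ℕ → ℕ) (x : ℝ) : fA μ 1 x = x * (μ 1 : ℝ) := by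
  have h := fA_succ μ 0 x
  simp only [Finset.range_one, Finset.sum_singleton, Nat.sub_zero, Nat.cast_zero, zero_add] at h
  rw [h, fA_zero, sigmaA_one]
  norm_num

lemma fA_two (μ : ℕ → ℕ) (x : ℝ) (h1 : μ 1 = 1) : fA μ 2 x = x/2 * (x + 1 + 2*(μ 2:ℝ)) := by
  have h := fA_succ μ 1 x
  rw [show (1:ℕ)+1 = 2 from rfl] at h
  rw [h]
  rw [Finset.sum_range_succ, Finset.sum_range_one]
  simp only [Nat.sub_zero, Nat.sub_self]
  rw [fA_one, fA_zero, sigmaA_one, sigmaA_two, h1]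
  push_cast
  ring

lemma pf_one (F : Finset ℕ) (h1 : 1 ∈ F) : pf F 1 = 3 := by
  unfold pf
  rw [fA_one]
  simp [h1]

lemma pf_two (F : Finset ℕ) (h1 : 1 ∈ F) : pf F 2 = 6 + 3 * (if 2 ∈ F then 1 else 0) := by
  unfold pf
  rw [fA_two _ _ (by simp [h1])]
  by_cases h2 : 2 ∈ F <;> simp [h2] <;> norm_num

lemma fA_congr (μ₁ μ₂ : ℕ → ℕ) (x : ℝ) (N : ℕ) (h : ∀ e, 1 ≤ e → e ≤ N → μ₁ e = μ₂ e) :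
    ∀ m, m ≤ N → fA μ₁ m x = fA μ₂ m x := by
  intro m
  induction m using Nat.strong_induction_on with
  | _ m ih =>
    match m with
    | 0 => intro _; rw [fA_zero, fA_zero]
    | Nat.succ m =>
      intro hmN
      rw [fA_succ, fA_succ]
      congr 1
      apply Finset.sum_congr rfl
      intro j hj
      simp only [Finset.mem_range] at hj
      have hσ : sigmaA μ₁ (j+1) = sigmaA μ₂ (j+1) := by
        unfold sigmaA
        apply Finset.sum_congr rfl
        intro e he
        rw [Nat.mem_divisors] at he
        have he1 : 1 ≤ e := Nat.pos_of_dvd_of_pos he.1 (by omega)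
        have he2 : e ≤ j+1 := Nat.le_of_dvd (by omega) he.1
        rw [h e he1 (by omega)]
      rw [hσ, ih (m-j) (by omega) (by omega)]

noncomputable def Inv (F : Finset ℕ) (a b : ℕ) : ℝ :=
  3 * pf F (min a b - 1)
    + 3 * ∑ d' ∈ (Finset.Icc (max a b + 1) (a+b)).filter (fun e => e ∉ F), pf F (a+b-d')

lemma Inv_comm (F : Finset ℕ) (a b : ℕ) : Inv F a b = Inv F b a := by
  simp only [Inv, min_comm a b, max_comm a b, add_comm a b]

lemma Inv_nonneg (F : Finset ℕ) (a b : ℕ) : 0 ≤ Inv F a b := by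
  unfold Inv
  have h1 := pf_nonneg F (min a b - 1)
  have h2 : (0:ℝ) ≤ ∑ d' ∈ (Finset.Icc (max a b + 1) (a+b)).filter (fun e => e ∉ F), pf F (a+b-d') :=
    Finset.sum_nonneg (fun i _ => pf_nonneg F _)
  linarith

def QF (F : Finset ℕ) : Prop := ∀ a b : ℕ, 1 ≤ b → b ≤ a → ¬(a = 1 ∧ b = 1) →
  pf F (a+b) + Inv F a b ≤ pf F a * pf F b

lemma QF_singleton : QF {1} := by
  intro a b hb hba hab
  have ha2 : 2 ≤ a := by omega
  obtain ⟨c, rfl⟩ : ∃ c, b = c+1 := ⟨b-1, by omega⟩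
  have hmin : min a (c+1) = c+1 := min_eq_right hba
  have hmax : max a (c+1) = a := max_eq_left hba
  unfold Inv
  rw [hmin, hmax]
  have hfilter : (Finset.Icc (a + 1) (a+(c+1))).filter (fun e => e ∉ ({1}:Finset ℕ))
      = Finset.Icc (a+1) (a+(c+1)) := by
    apply Finset.filter_true_of_mem
    intro x hx
    simp only [Finset.mem_Icc] at hx
    simp only [Finset.mem_singleton]
    omega
  rw [hfilter]
  have hsum : ∑ d' ∈ Finset.Icc (a+1) (a+(c+1)), pf {1} (a+(c+1)-d')
      = ((c:ℝ)+1)*((c:ℝ)+2)*((c:ℝ)+3)/6 := by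
    have h1 : ∀ d' ∈ Finset.Icc (a+1) (a+(c+1)), pf {1} (a+(c+1)-d') = Bq (a+(c+1)-d') :=
      fun d' _ => pf_singleton _
    rw [Finset.sum_congr rfl h1, ← Finset.Ico_add_one_right_eq_Icc, Finset.sum_Ico_eq_sum_range]
    have h2 : a+(c+1)+1-(a+1) = c+1 := by omega
    rw [h2]
    have h3 : ∀ i ∈ Finset.range (c+1), Bq (a+(c+1)-(a+1+i)) = Bq (c-i) := by
      intro i hi
      simp only [Finset.mem_range] at hi
      congr 1
      omega
    rw [Finset.sum_congr rfl h3]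
    have h4 := Finset.sum_range_reflect (fun u => Bq u) (c+1)
    simp only [Nat.add_sub_cancel] at h4
    rw [h4, sum_Bq]
    push_cast
    ring
  rw [hsum, pf_singleton, pf_singleton, pf_singleton, pf_singleton]
  have hc1 : (c+1) - 1 = c := by omega
  rw [hc1]
  unfold Bq
  have hA : (2:ℝ) ≤ (a:ℝ) := by exact_mod_cast ha2
  have hC : (0:ℝ) ≤ (c:ℝ) := Nat.cast_nonneg c
  have hAC : (c:ℝ)+1 ≤ (a:ℝ) := by exact_mod_cast hba
  push_cast
  nlinarith [mul_nonneg (sub_nonneg.2 hAC) hC, sq_nonneg ((a:ℝ)-(c:ℝ)-1), sq_nonneg ((a:ℝ)-2),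
    mul_nonneg (mul_nonneg (sub_nonneg.2 hAC) hC) hC,
    mul_nonneg (mul_nonneg (sub_nonneg.2 hA) hC) hC,
    mul_nonneg (mul_nonneg (sub_nonneg.2 hA) (sub_nonneg.2 hAC)) hC]

lemma QF_step (G : Finset ℕ) (hG : ∀ e ∈ G, 2 ≤ e) (d : ℕ) (hd2 : 2 ≤ d) (hdG : d ∉ G)
    (hQ : QF (insert 1 G)) : QF (insert d (insert 1 G)) := by
  set F : Finset ℕ := insert 1 G with hF
  have h1F : 1 ∈ F := Finset.mem_insert_self 1 G
  have hdF : d ∉ F := by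
    rw [hF]
    simp only [Finset.mem_insert]
    push_neg
    exact ⟨by omega, hdG⟩
  have hd0 : 0 < d := by omega
  have hmono : ∀ {m n : ℕ}, m ≤ n → pf F m ≤ pf F n := fun {m n} h => pf_mono G hG h
  have hge1 : ∀ n, 1 ≤ pf F n := pf_ge_one G hG
  have hf2le : pf F 2 ≤ 9 := by
    rw [pf_two F h1F]
    split <;> norm_num
  -- weak Bessenrodt-Ono
  have bo_weak : ∀ α β : ℕ, pf F (α+β) ≤ pf F α * pf F β := by
    intro α β
    rcases Nat.eq_zero_or_pos α with hα | hα
    · subst hα; rw [pf_zero, zero_add, one_mul]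
    rcases Nat.eq_zero_or_pos β with hβ | hβ
    · subst hβ; rw [pf_zero, add_zero, mul_one]
    by_cases h11 : α = 1 ∧ β = 1
    · obtain ⟨rfl, rfl⟩ := h11
      rw [pf_one F h1F]
      norm_num
      exact hf2le
    · rcases le_total β α with hle | hle
      · have := hQ α β hβ hle h11
        have hI := Inv_nonneg F α β
        linarith
      · have := hQ β α hα hle (by tauto)
        have hI := Inv_nonneg F β α
        rw [add_comm β α] at this
        have hI2 := Inv_nonneg F β α
        nlinarith [this]
  -- strong version used for the overflow term
  have bo3 : ∀ α β : ℕ, 1 ≤ α → 1 ≤ β → α < d → β < d → d ≤ α+β →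
      pf F (α+β) + 3 * pf F (α+β-d) ≤ pf F α * pf F β := by
    intro α β hα hβ hαd hβd hdαβ
    by_cases h11 : α = 1 ∧ β = 1
    · obtain ⟨rfl, rfl⟩ := h11
      have hd2' : d = 2 := by omega
      have h2F : 2 ∉ F := by rw [← hd2']; exact hdF
      rw [pf_one F h1F, pf_two F h1F, if_neg h2F, hd2']
      norm_num [pf_zero]
    · have hmm : α+β-d ≤ min α β - 1 := by omega
      have hmono1 : pf F (α+β-d) ≤ pf F (min α β - 1) := hmono hmm
      rcases le_total β α with hle | hle
      · have h := hQ α β hβ hle h11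
        have hsum : (0:ℝ) ≤ ∑ d' ∈ (Finset.Icc (max α β + 1) (α+β)).filter (fun e => e ∉ F), pf F (α+β-d') :=
          Finset.sum_nonneg (fun i _ => pf_nonneg F _)
        rw [Inv] at h
        linarith
      · have h := hQ β α hα hle (by tauto)
        rw [Inv] at h
        rw [add_comm β α, min_comm β α, max_comm β α] at h
        have hsum : (0:ℝ) ≤ ∑ d' ∈ (Finset.Icc (max α β + 1) (α+β)).filter (fun e => e ∉ F), pf F (α+β-d') :=
          Finset.sum_nonneg (fun i _ => pf_nonneg F _)
        nlinarith [h]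
  -- small values of the new partition function agree with the old one
  have hgsmall : ∀ n, n < d → pf (insert d F) n = pf F n := by
    intro n hn
    rw [pf_insert F d (by omega) hdF n, Nat.div_eq_of_lt hn]
    simp [Bq_zero]
  intro a b hb hba hab
  have ha2 : 2 ≤ a := by omega
  rcases lt_or_ge (a+b) d with hcase3 | hcase12
  · -- d > a+b : everything is unchanged
    rw [hgsmall a (by omega), hgsmall b (by omega), hgsmall (a+b) hcase3]
    have hInv : Inv (insert d F) a b = Inv F a b := by
      unfold Inv
      congr 1
      · rw [hgsmall (min a b - 1) (by omega)]
      · congr 1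
        have hset : (Finset.Icc (max a b + 1) (a+b)).filter (fun e => e ∉ insert d F)
            = (Finset.Icc (max a b + 1) (a+b)).filter (fun e => e ∉ F) := by
          apply Finset.filter_congr
          intro x hx
          simp only [Finset.mem_Icc] at hx
          simp only [Finset.mem_insert, eq_iff_iff]
          constructor
          · intro h hxF; exact h (Or.inr hxF)
          · intro h hor
            rcases hor with h1 | h2
            · omega
            · exact h h2
        rw [hset]
        apply Finset.sum_congr rfl
        intro x hx
        simp only [Finset.mem_filter, Finset.mem_Icc] at hx
        rw [hgsmall (a+b-x) (by omega)]
    rw [hInv]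
    exact hQ a b hb hba hab
  rcases lt_or_ge a d with hcase2 | hcase1
  · -- a < d ≤ a+b
    have hba' : b ≤ a := hba
    rw [hgsmall a hcase2, hgsmall b (by omega)]
    have hgab : pf (insert d F) (a+b) = pf F (a+b) + 3 * pf F (a+b-d) := by
      rw [pf_insert F d (by omega) hdF (a+b)]
      have hdiv1 : (a+b)/d = 1 := Nat.div_eq_of_lt_le (by omega) (by omega)
      rw [hdiv1]
      rw [Finset.sum_range_succ, Finset.sum_range_one]
      rw [Bq_zero, Bq_one]
      norm_num
    have hmin : min a b = b := min_eq_right hba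
    have hmax : max a b = a := max_eq_left hba
    have hdTS : d ∈ (Finset.Icc (a + 1) (a+b)).filter (fun e => e ∉ F) := by
      simp only [Finset.mem_filter, Finset.mem_Icc]
      exact ⟨⟨by omega, by omega⟩, hdF⟩
    have herase : (Finset.Icc (a + 1) (a+b)).filter (fun e => e ∉ insert d F)
        = ((Finset.Icc (a + 1) (a+b)).filter (fun e => e ∉ F)).erase d := by
      ext x
      simp only [Finset.mem_filter, Finset.mem_Icc, Finset.mem_erase, Finset.mem_insert]
      constructor
      · rintro ⟨⟨h1, h2⟩, h3⟩
        push_neg at h3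
        exact ⟨h3.1, ⟨h1, h2⟩, h3.2⟩
      · rintro ⟨h1, ⟨h2, h3⟩, h4⟩
        refine ⟨⟨h2, h3⟩, ?_⟩
        push_neg
        exact ⟨h1, h4⟩
    have hInvg : Inv (insert d F) a b
        = 3 * pf F (b-1)
          + 3 * ∑ d' ∈ ((Finset.Icc (a + 1) (a+b)).filter (fun e => e ∉ F)).erase d, pf F (a+b-d') := by
      unfold Inv
      rw [hmin, hmax, herase, hgsmall (b-1) (by omega)]
      congr 1
      congr 1
      apply Finset.sum_congr rfl
      intro x hx
      simp only [Finset.mem_erase, Finset.mem_filter, Finset.mem_Icc] at hx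
      rw [hgsmall (a+b-x) (by omega)]
    have hQab := hQ a b hb hba hab
    rw [Inv, hmin, hmax] at hQab
    have hsplit := Finset.add_sum_erase _ (fun d' => pf F (a+b-d')) hdTS
    rw [hgab, hInvg]
    linarith
  · -- d ≤ a : the main case
    have hminab : min a b = b := min_eq_right hba
    have hmaxab : max a b = a := max_eq_left hba
    set I := a / d with hIdef
    set J := b / d with hJdef
    set J1 := (b-1) / d with hJ1def
    set K := (a+b) / d with hKdef
    have hIdle : I * d ≤ a := Nat.div_mul_le_self a d
    have hJdle : J * d ≤ b := Nat.div_mul_le_self b d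
    have hJ1dle : J1 * d ≤ b-1 := Nat.div_mul_le_self (b-1) d
    have hdmA : d * I + a % d = a := Nat.div_add_mod a d
    have hdmB : d * J + b % d = b := Nat.div_add_mod b d
    have hmodA : a % d < d := Nat.mod_lt a hd0
    have hmodB : b % d < d := Nat.mod_lt b hd0
    have hIdc : I * d = d * I := mul_comm _ _
    have hJdc : J * d = d * J := mul_comm _ _
    have hI1 : 1 ≤ I := (Nat.one_le_div_iff hd0).2 hcase1
    have hKIJ : K = I + J + if d ≤ a % d + b % d then 1 else 0 := Nat.add_div hd0
    have hJ1J : J1 ≤ J := Nat.div_le_div_right (by omega)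
    have hKJ1 : J + 1 ≤ K + 1 := by rcases le_or_gt d (a % d + b % d) with h|h
                                    · rw [if_pos h] at hKIJ; omega
                                    · rw [if_neg (by omega)] at hKIJ; omega
    have hJcases : (b % d = 0 ∧ J = J1 + 1) ∨ (b % d ≠ 0 ∧ J1 = J) := by
      by_cases hbd : b % d = 0
      · left
        refine ⟨hbd, ?_⟩
        have hJpos : 1 ≤ J := by
          rcases Nat.eq_zero_or_pos J with h | h
          · rw [h, Nat.mul_zero] at hdmB; omega
          · exact h
        have hJ1val : J1 = J - 1 := by
          rw [hJ1def]
          refine Nat.div_eq_of_lt_le ?_ ?_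
          · have h1 : (J-1)*d = J*d - d := by rw [Nat.sub_mul, one_mul]
            omega
          · have h2 : (J-1+1)*d = J*d := by
              congr 1
              omega
            omega
        omega
      · right
        refine ⟨hbd, ?_⟩
        rw [hJ1def]
        refine Nat.div_eq_of_lt_le (by omega) ?_
        have h2 : (J+1)*d = J*d + d := by rw [Nat.add_mul, one_mul]
        omega
    have hga : pf (insert d F) a = ∑ i ∈ Finset.range (I+1), Bq i * pf F (a - i*d) :=
      pf_insert F d (by omega) hdF a
    have hgb : pf (insert d F) b = ∑ j ∈ Finset.range (J+1), Bq j * pf F (b - j*d) :=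
      pf_insert F d (by omega) hdF b
    have hgab : pf (insert d F) (a+b) = ∑ m ∈ Finset.range (K+1), Bq m * pf F (a+b - m*d) :=
      pf_insert F d (by omega) hdF (a+b)
    have hgb1 : pf (insert d F) (b-1) = ∑ j ∈ Finset.range (J1+1), Bq j * pf F (b-1 - j*d) :=
      pf_insert F d (by omega) hdF (b-1)
    have hTsplit := Finset.sum_range_succ' (fun i => Bq i * pf F (a - i*d)) I
    simp only [Bq_zero, one_mul, Nat.zero_mul, Nat.sub_zero] at hTsplit
    have hgbJ := Finset.sum_range_succ (fun j => Bq j * pf F (b - j*d)) J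
    have hTnn : (0:ℝ) ≤ ∑ i ∈ Finset.range I, Bq (i+1) * pf F (a-(i+1)*d) :=
      Finset.sum_nonneg (fun i _ => mul_nonneg (Bq_nonneg _) (pf_nonneg _ _))
    have hgbrest : (0:ℝ) ≤ ∑ j ∈ Finset.range J, Bq j * pf F (b - j*d) :=
      Finset.sum_nonneg (fun j _ => mul_nonneg (Bq_nonneg _) (pf_nonneg _ _))
    -- Step 1 : lower bound for the product
    have step1 : pf F a * pf (insert d F) b
        + (∑ i ∈ Finset.range I, Bq (i+1) * pf F (a-(i+1)*d)) * (Bq J * pf F (b - J*d))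
        ≤ pf (insert d F) a * pf (insert d F) b := by
      have hgbge : Bq J * pf F (b - J*d) ≤ pf (insert d F) b := by
        rw [hgb, hgbJ]
        linarith
      have hTgb := mul_le_mul_of_nonneg_left hgbge hTnn
      have hEq : pf (insert d F) a
          = pf F a + ∑ i ∈ Finset.range I, Bq (i+1) * pf F (a-(i+1)*d) := by
        rw [hga, hTsplit]; ring
      have hprod : pf (insert d F) a * pf (insert d F) b
          = pf F a * pf (insert d F) b
            + (∑ i ∈ Finset.range I, Bq (i+1) * pf F (a-(i+1)*d)) * pf (insert d F) b := by
        rw [hEq]; ring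
      linarith
    -- Claim 1 : the column (0,j)
    have claim1 : ∑ j ∈ Finset.range (J+1), Bq j * pf F (a+b-j*d)
        + 3 * ∑ j ∈ Finset.range (J1+1), Bq j * pf F (b-1-j*d)
        + 3 * ∑ j ∈ Finset.range (J1+1), Bq j *
            (∑ d' ∈ (Finset.Icc (a+1) (a+b-j*d)).filter (fun e => e ∉ F), pf F (a+b-j*d-d'))
        ≤ pf F a * pf (insert d F) b := by
      have hrhs : pf F a * pf (insert d F) b
          = ∑ j ∈ Finset.range (J+1), pf F a * (Bq j * pf F (b - j*d)) := by
        rw [hgb, Finset.mul_sum]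
      rw [hrhs]
      have htermwise : ∀ j ∈ Finset.range (J+1),
          Bq j * pf F (a+b-j*d)
            + (if j ≤ J1 then Bq j * (3 * pf F (b-1-j*d)
                + 3 * ∑ d' ∈ (Finset.Icc (a+1) (a+b-j*d)).filter (fun e => e ∉ F), pf F (a+b-j*d-d'))
              else 0)
          ≤ pf F a * (Bq j * pf F (b-j*d)) := by
        intro j hj
        simp only [Finset.mem_range] at hj
        by_cases hjJ1 : j ≤ J1
        · rw [if_pos hjJ1]
          have hjd : j*d ≤ b-1 := le_trans (Nat.mul_le_mul hjJ1 (le_refl d)) hJ1dle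
          have hQj := hQ a (b - j*d) (by omega) (by omega) (by omega)
          rw [Inv] at hQj
          rw [min_eq_right (by omega : b - j*d ≤ a), max_eq_left (by omega : b - j*d ≤ a)] at hQj
          have hidx1 : a + (b - j*d) = a+b-j*d := by omega
          have hidx2 : b - j*d - 1 = b-1-j*d := by omega
          simp only [hidx1, hidx2] at hQj
          have hBq := Bq_nonneg j
          nlinarith [mul_le_mul_of_nonneg_left hQj hBq]
        · rw [if_neg hjJ1]
          have hforce : j = J ∧ b % d = 0 := by
            rcases hJcases with ⟨h1, h2⟩ | ⟨h1, h2⟩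
            · constructor <;> omega
            · omega
          obtain ⟨rfl, hbd0⟩ := hforce
          have hbJ0 : b - J*d = 0 := by omega
          rw [hbJ0, pf_zero, mul_one, show a+b-J*d = a from by omega, add_zero]
          exact le_of_eq (mul_comm _ _)
      have hsum := Finset.sum_le_sum htermwise
      rw [Finset.sum_add_distrib] at hsum
      rw [sum_range_ite_le (show J1 + 1 ≤ J + 1 from by omega)] at hsum
      have hdistr : ∑ j ∈ Finset.range (J1+1), Bq j * (3 * pf F (b-1-j*d)
            + 3 * ∑ d' ∈ (Finset.Icc (a+1) (a+b-j*d)).filter (fun e => e ∉ F), pf F (a+b-j*d-d'))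
          = 3 * ∑ j ∈ Finset.range (J1+1), Bq j * pf F (b-1-j*d)
            + 3 * ∑ j ∈ Finset.range (J1+1), Bq j *
              (∑ d' ∈ (Finset.Icc (a+1) (a+b-j*d)).filter (fun e => e ∉ F), pf F (a+b-j*d-d')) := by
        rw [Finset.mul_sum, Finset.mul_sum, ← Finset.sum_add_distrib]
        exact Finset.sum_congr rfl (fun j _ => by ring)
      linarith
    -- Claim 2 : the double sum swap
    have claim2 : ∑ j ∈ Finset.range (J1+1), Bq j *
          (∑ d' ∈ (Finset.Icc (a+1) (a+b-j*d)).filter (fun e => e ∉ F), pf F (a+b-j*d-d'))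
        = ∑ d' ∈ (Finset.Icc (a+1) (a+b)).filter (fun e => e ∉ F), pf (insert d F) (a+b-d') := by
      have stepA : ∀ j ∈ Finset.range (J1+1),
          Bq j * (∑ d' ∈ (Finset.Icc (a+1) (a+b-j*d)).filter (fun e => e ∉ F), pf F (a+b-j*d-d'))
          = ∑ d' ∈ (Finset.Icc (a+1) (a+b)).filter (fun e => e ∉ F),
              (if d' + j*d ≤ a+b then Bq j * pf F (a+b-j*d-d') else 0) := by
        intro j hj
        simp only [Finset.mem_range] at hj
        have hjd : j*d ≤ b-1 := le_trans (Nat.mul_le_mul (by omega : j ≤ J1) (le_refl d)) hJ1dle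
        have hset : (Finset.Icc (a+1) (a+b-j*d)).filter (fun e => e ∉ F)
            = ((Finset.Icc (a+1) (a+b)).filter (fun e => e ∉ F)).filter (fun d' => d' + j*d ≤ a+b) := by
          rw [Finset.filter_filter]
          ext x
          simp only [Finset.mem_filter, Finset.mem_Icc]
          constructor
          · rintro ⟨⟨h1,h2⟩,h3⟩
            exact ⟨⟨h1, by omega⟩, h3, by omega⟩
          · rintro ⟨⟨h1,h2⟩,h3,h4⟩
            exact ⟨⟨h1, by omega⟩, h3⟩
        rw [hset, Finset.sum_filter, Finset.mul_sum]
        exact Finset.sum_congr rfl (fun x _ => by rw [mul_ite, mul_zero])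
      rw [Finset.sum_congr rfl stepA, Finset.sum_comm]
      apply Finset.sum_congr rfl
      intro d' hd'
      simp only [Finset.mem_filter, Finset.mem_Icc] at hd'
      rw [pf_insert F d (by omega) hdF (a+b-d')]
      have hd'b : a+b-d' ≤ b-1 := by omega
      have hMle : (a+b-d')/d ≤ J1 := by
        rw [hJ1def]
        exact Nat.div_le_div_right hd'b
      have hcond : ∀ j ∈ Finset.range (J1+1),
          (if d' + j*d ≤ a+b then Bq j * pf F (a+b-j*d-d') else 0)
          = (if j ≤ (a+b-d')/d then Bq j * pf F (a+b-d'-j*d) else 0) := by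
        intro j hj
        have hidx : a+b-j*d-d' = a+b-d'-j*d := by omega
        rw [hidx]
        refine if_congr ?_ rfl rfl
        constructor
        · intro h
          exact (Nat.le_div_iff_mul_le hd0).2 (by omega)
        · intro h
          have := (Nat.le_div_iff_mul_le hd0).1 h
          omega
      rw [Finset.sum_congr rfl hcond, sum_range_ite_le (show (a+b-d')/d + 1 ≤ J1+1 from by omega)]
    -- Claim 3 : the row (i,J), i ≥ 1
    have claim3 : ∑ i ∈ Finset.range (K-J), Bq (J+1+i) * pf F (a+b-(J+1+i)*d)
        ≤ (∑ i ∈ Finset.range I, Bq (i+1) * pf F (a-(i+1)*d)) * (Bq J * pf F (b-J*d)) := by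
      have hgen : ∀ i, i < I → Bq (J+1+i) * pf F (a+b-(J+1+i)*d)
          ≤ (Bq (i+1) * pf F (a-(i+1)*d)) * (Bq J * pf F (b-J*d)) := by
        intro i hiI
        have hi1d : (i+1)*d ≤ a := le_trans (Nat.mul_le_mul (by omega : i+1 ≤ I) (le_refl d)) hIdle
        have he1 : (J+1+i)*d = J*d + (i+1)*d := by ring
        have hidx : (a-(i+1)*d) + (b-J*d) = a+b-(J+1+i)*d := by omega
        have hbo := bo_weak (a-(i+1)*d) (b-J*d)
        rw [hidx] at hbo
        have hBq : Bq (J+1+i) ≤ Bq (i+1) * Bq J := by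
          rw [show J+1+i = (i+1)+J from by omega]
          exact Bq_submul (i+1) J
        calc Bq (J+1+i) * pf F (a+b-(J+1+i)*d)
            ≤ (Bq (i+1) * Bq J) * (pf F (a-(i+1)*d) * pf F (b-J*d)) :=
              mul_le_mul hBq hbo (pf_nonneg _ _) (mul_nonneg (Bq_nonneg _) (Bq_nonneg _))
          _ = (Bq (i+1) * pf F (a-(i+1)*d)) * (Bq J * pf F (b-J*d)) := by ring
      by_cases hbad : d ≤ a % d + b % d
      · have hKJI : K - J = I + 1 := by rw [hKIJ, if_pos hbad]; omega
        rw [hKJI]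
        obtain ⟨I', hI'⟩ : ∃ I', I = I' + 1 := ⟨I - 1, by omega⟩
        rw [hI']
        rw [Finset.sum_range_succ (fun i => Bq (J+1+i) * pf F (a+b-(J+1+i)*d)) (I'+1)]
        rw [Finset.sum_range_succ (fun i => Bq (J+1+i) * pf F (a+b-(J+1+i)*d)) I']
        rw [Finset.sum_range_succ (fun i => Bq (i+1) * pf F (a-(i+1)*d)) I']
        have hpart1 : ∑ i ∈ Finset.range I', Bq (J+1+i) * pf F (a+b-(J+1+i)*d)
            ≤ (∑ i ∈ Finset.range I', Bq (i+1) * pf F (a-(i+1)*d)) * (Bq J * pf F (b-J*d)) := by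
          rw [Finset.sum_mul]
          exact Finset.sum_le_sum (fun i hi => by
            simp only [Finset.mem_range] at hi
            exact hgen i (by omega))
        -- the enhanced last step
        have hIJd : (I+J)*d = I*d + J*d := by ring
        have hIJ1d : (I+J+1)*d = I*d + J*d + d := by ring
        have hidxIJ : a+b-(J+1+I')*d = a % d + b % d := by
          have h1 : (J+1+I')*d = (I+J)*d := by rw [hI']; ring
          omega
        have hidxIJ1 : a+b-(J+1+(I'+1))*d = a % d + b % d - d := by
          have h1 : (J+1+(I'+1))*d = (I+J+1)*d := by rw [hI']; ring
          omega
        have hidxra : a-(I'+1)*d = a % d := by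
          have h1 : (I'+1)*d = I*d := by rw [hI']
          omega
        have hidxrb : b-J*d = b % d := by omega
        have hBqIJ : Bq (J+1+I') = Bq (I+J) := by rw [show J+1+I' = I+J from by omega]
        have hBqIJ1 : Bq (J+1+(I'+1)) = Bq (I+J+1) := by rw [show J+1+(I'+1) = I+J+1 from by omega]
        have hBqI : Bq (I'+1) = Bq I := by rw [show I'+1 = I from by omega]
        have h3 := bo3 (a % d) (b % d) (by omega) (by omega) hmodA hmodB hbad
        have hsub := Bq_submul I J
        have hsucc := Bq_succ_le (I+J)
        have hlast : Bq (J+1+I') * pf F (a+b-(J+1+I')*d)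
            + Bq (J+1+(I'+1)) * pf F (a+b-(J+1+(I'+1))*d)
            ≤ (Bq (I'+1) * pf F (a-(I'+1)*d)) * (Bq J * pf F (b-J*d)) := by
          rw [hidxIJ, hidxIJ1, hidxra, hidxrb, hBqIJ, hBqIJ1, hBqI]
          have hY := pf_nonneg F (a % d + b % d - d)
          have hX := pf_nonneg F (a % d + b % d)
          have hZ : (0:ℝ) ≤ pf F (a % d) * pf F (b % d) :=
            mul_nonneg (pf_nonneg _ _) (pf_nonneg _ _)
          have e1 : Bq (I+J) * (pf F (a % d + b % d) + 3 * pf F (a % d + b % d - d))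
              ≤ Bq (I+J) * (pf F (a % d) * pf F (b % d)) :=
            mul_le_mul_of_nonneg_left h3 (Bq_nonneg _)
          have e2 : Bq (I+J) * (pf F (a % d) * pf F (b % d))
              ≤ (Bq I * Bq J) * (pf F (a % d) * pf F (b % d)) :=
            mul_le_mul_of_nonneg_right hsub hZ
          have e3 : Bq (I+J+1) * pf F (a % d + b % d - d)
              ≤ (3 * Bq (I+J)) * pf F (a % d + b % d - d) :=
            mul_le_mul_of_nonneg_right hsucc hY
          calc Bq (I+J) * pf F (a % d + b % d) + Bq (I+J+1) * pf F (a % d + b % d - d)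
              ≤ Bq (I+J) * pf F (a % d + b % d) + (3 * Bq (I+J)) * pf F (a % d + b % d - d) := by
                linarith [e3]
            _ = Bq (I+J) * (pf F (a % d + b % d) + 3 * pf F (a % d + b % d - d)) := by ring
            _ ≤ Bq (I+J) * (pf F (a % d) * pf F (b % d)) := e1
            _ ≤ (Bq I * Bq J) * (pf F (a % d) * pf F (b % d)) := e2
            _ = Bq I * pf F (a % d) * (Bq J * pf F (b % d)) := by ring
        show (∑ i ∈ Finset.range I', Bq (J+1+i) * pf F (a+b-(J+1+i)*d))
            + Bq (J+1+I') * pf F (a+b-(J+1+I')*d)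
            + Bq (J+1+(I'+1)) * pf F (a+b-(J+1+(I'+1))*d)
          ≤ ((∑ i ∈ Finset.range I', Bq (i+1) * pf F (a-(i+1)*d))
              + Bq (I'+1) * pf F (a-(I'+1)*d)) * (Bq J * pf F (b-J*d))
        have hexp : ((∑ i ∈ Finset.range I', Bq (i+1) * pf F (a-(i+1)*d))
              + Bq (I'+1) * pf F (a-(I'+1)*d)) * (Bq J * pf F (b-J*d))
            = (∑ i ∈ Finset.range I', Bq (i+1) * pf F (a-(i+1)*d)) * (Bq J * pf F (b-J*d))
              + Bq (I'+1) * pf F (a-(I'+1)*d) * (Bq J * pf F (b-J*d)) := by ring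
        linarith [hpart1, hlast, hexp]
      · have hKJI : K - J = I := by rw [hKIJ, if_neg hbad]; omega
        rw [hKJI, Finset.sum_mul]
        exact Finset.sum_le_sum (fun i hi => by
          simp only [Finset.mem_range] at hi
          exact hgen i hi)
    -- Claim 4 : splitting the covering sum
    have claim4 : ∑ m ∈ Finset.range (K+1), Bq m * pf F (a+b-m*d)
        = ∑ m ∈ Finset.range (J+1), Bq m * pf F (a+b-m*d)
          + ∑ i ∈ Finset.range (K-J), Bq (J+1+i) * pf F (a+b-(J+1+i)*d) := by
      have h2 : ∑ i ∈ Finset.Ico (J+1) (K+1), Bq i * pf F (a+b-i*d)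
          = ∑ i ∈ Finset.range (K-J), Bq (J+1+i) * pf F (a+b-(J+1+i)*d) := by
        rw [Finset.sum_Ico_eq_sum_range]
        have hKJeq : K+1-(J+1) = K-J := by omega
        rw [hKJeq]
      rw [Finset.range_eq_Ico,
        ← Finset.sum_Ico_consecutive (fun m => Bq m * pf F (a+b-m*d)) (Nat.zero_le (J+1)) hKJ1,
        h2, ← Finset.range_eq_Ico]
    -- Assemble the invariant of the new set
    have hsetg : (Finset.Icc (a+1) (a+b)).filter (fun e => e ∉ insert d F)
        = (Finset.Icc (a+1) (a+b)).filter (fun e => e ∉ F) := by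
      apply Finset.filter_congr
      intro x hx
      simp only [Finset.mem_Icc] at hx
      simp only [Finset.mem_insert, eq_iff_iff]
      constructor
      · intro h hxF; exact h (Or.inr hxF)
      · intro h hor
        rcases hor with h1 | h2
        · omega
        · exact h h2
    have hInvg : Inv (insert d F) a b = 3 * pf (insert d F) (b-1)
        + 3 * ∑ d' ∈ (Finset.Icc (a+1) (a+b)).filter (fun e => e ∉ F), pf (insert d F) (a+b-d') := by
      unfold Inv
      rw [hminab, hmaxab, hsetg]
    rw [hgab, hInvg, claim4, hgb1]
    linarith [claim1, claim2, claim3, step1, hgb1]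


lemma main_induction : ∀ (G : Finset ℕ), (∀ e ∈ G, 2 ≤ e) → QF (insert 1 G) := by
  intro G
  induction G using Finset.induction_on with
  | empty =>
    intro _
    exact QF_singleton
  | @insert d G hdG ih =>
    intro hval
    have hd2 : 2 ≤ d := hval d (Finset.mem_insert_self d G)
    have hG : ∀ e ∈ G, 2 ≤ e := fun e he => hval e (Finset.mem_insert_of_mem he)
    have hcomm : insert 1 (insert d G) = insert d (insert 1 G) := by
      ext x; simp only [Finset.mem_insert]; tauto
    rw [hcomm]
    exact QF_step G hG d hd2 hdG (ih hG)

lemma BO_strict (G : Finset ℕ) (hG : ∀ e ∈ G, 2 ≤ e) (a b : ℕ) (ha : 1 ≤ a) (hb : 1 ≤ b)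
    (hab : ¬(a = 1 ∧ b = 1)) : pf (insert 1 G) (a+b) < pf (insert 1 G) a * pf (insert 1 G) b := by
  have hQ := main_induction G hG
  have key : ∀ u v : ℕ, 1 ≤ v → v ≤ u → ¬(u = 1 ∧ v = 1) →
      pf (insert 1 G) (u+v) < pf (insert 1 G) u * pf (insert 1 G) v := by
    intro u v hv hvu huv
    have h := hQ u v hv hvu huv
    have h1 : 1 ≤ pf (insert 1 G) (min u v - 1) := pf_ge_one G hG _
    have h2 : (0:ℝ) ≤ ∑ d' ∈ (Finset.Icc (max u v + 1) (u+v)).filter (fun e => e ∉ insert 1 G),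
        pf (insert 1 G) (u+v-d') := Finset.sum_nonneg (fun i _ => pf_nonneg _ _)
    rw [Inv] at h
    linarith
  rcases le_total b a with hba | hba
  · exact key a b hb hba hab
  · have := key b a ha hba (by tauto)
    rw [add_comm b a] at this
    calc pf (insert 1 G) (a+b) < pf (insert 1 G) b * pf (insert 1 G) a := this
    _ = pf (insert 1 G) a * pf (insert 1 G) b := mul_comm _ _


end BO

/-- Bessenrodt-Ono inequality at x = 3 for a set A of positive integers with 1 in A: f_{A,a}(3) f_{A,b}(3) > f_{A,a+b}(3) for all a, b >= 1 with (a,b) != (1,1), and f_{A,1}(3)^2 >= f_{A,2}(3) with equality iff 2 in A. -/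
theorem stmt_11 (A : Set ℕ) (h0 : 0 ∉ A) (h1 : 1 ∈ A) :
    (∀ a b : ℕ, 1 ≤ a → 1 ≤ b → ¬(a = 1 ∧ b = 1) →
      fS A a 3 * fS A b 3 > fS A (a + b) 3) ∧
    fS A 1 3 * fS A 1 3 ≥ fS A 2 3 ∧
    (fS A 1 3 * fS A 1 3 = fS A 2 3 ↔ 2 ∈ A) := by
  have hf1 : fS A 1 3 = 3 := by
    unfold fS
    rw [BO.fA_one]
    rw [if_pos h1]
    norm_num
  have hf2 : fS A 2 3 = 6 + 3 * (if 2 ∈ A then 1 else 0) := by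
    unfold fS
    rw [BO.fA_two _ _ (by rw [if_pos h1])]
    by_cases h2 : 2 ∈ A
    · rw [if_pos h2, if_pos h2]; norm_num
    · rw [if_neg h2, if_neg h2]; norm_num
  refine ⟨?_, ?_, ?_⟩
  · intro a b ha hb hab
    set G : Finset ℕ := (Finset.Icc 2 (a+b)).filter (fun e => e ∈ A) with hGdef
    have hG : ∀ e ∈ G, 2 ≤ e := by
      intro e he
      rw [hGdef] at he
      simp only [Finset.mem_filter, Finset.mem_Icc] at he
      omega
    have htr : ∀ m, m ≤ a+b → fS A m 3 = BO.pf (insert 1 G) m := by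
      intro m hm
      unfold fS BO.pf
      refine BO.fA_congr _ _ 3 (a+b) ?_ m hm
      intro e he1 he2
      by_cases he : e = 1
      · subst he
        rw [if_pos h1, if_pos (Finset.mem_insert_self 1 G)]
      · have h2e : 2 ≤ e := by omega
        by_cases heA : e ∈ A
        · rw [if_pos heA, if_pos ?_]
          apply Finset.mem_insert_of_mem
          rw [hGdef]
          simp only [Finset.mem_filter, Finset.mem_Icc]
          exact ⟨⟨h2e, he2⟩, heA⟩
        · rw [if_neg heA, if_neg ?_]
          simp only [Finset.mem_insert]
          push_neg
          refine ⟨he, ?_⟩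
          rw [hGdef]
          simp only [Finset.mem_filter, Finset.mem_Icc]
          tauto
    rw [htr a (by omega), htr b (by omega), htr (a+b) (le_refl _)]
    exact BO.BO_strict G hG a b ha hb hab
  · rw [hf1, hf2]
    by_cases h2 : 2 ∈ A
    · rw [if_pos h2]; norm_num
    · rw [if_neg h2]; norm_num
  · rw [hf1, hf2]
    by_cases h2 : 2 ∈ A
    · rw [if_pos h2]
      constructor
      · intro _; exact h2
      · intro _; norm_num
    · rw [if_neg h2]
      constructor
      · intro h; norm_num at h
      · intro h; exact absurd h h2
end

section
/- For every set A ⊆ ℕ with 1 ∈ A, the inequality f_{A,a}(x)·f_{A,b}(x) > f_{A,a+b}(x) holds for all real x ≥ 3 and all positive integers a, b except a = b = 1; for a = b = 1 one has f_{A,1}(3)² ≥ f_{A,2}(3) (with equality iff 2 ∈ A) and f_{A,1}(x)² > f_{A,2}(x) for all x > 3. -/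
open scoped Classical

lemma fA_zero (μ : ℕ → ℕ) (x : ℝ) : fA μ 0 x = 1 := by rw [fA]
section
variable {μ : ℕ → ℕ} (hμ1 : μ 1 = 1) (hμ : ∀ d, μ d ≤ 1)

include hμ1 in
lemma one_le_sigma {j : ℕ} (hj : 1 ≤ j) : 1 ≤ sigmaA μ j := by
  have h1 : 1 ∈ Nat.divisors j := Nat.one_mem_divisors.2 (by omega)
  calc 1 = 1 * μ 1 := by rw [hμ1]
  _ ≤ ∑ d ∈ Nat.divisors j, d * μ d :=
    Finset.single_le_sum (f := fun d => d * μ d) (fun i _ => Nat.zero_le _) h1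
  _ = sigmaA μ j := rfl

include hμ1 in
lemma fA_pos {x : ℝ} (hx : 0 < x) : ∀ n, 0 < fA μ n x := by
  intro n
  induction n using Nat.strong_induction_on with
  | _ n ih =>
    match n with
    | 0 => rw [fA_zero]; norm_num
    | n + 1 =>
      rw [fA_succ]
      apply mul_pos (by positivity)
      apply Finset.sum_pos'
      · intro j hj
        have := ih (n - j) (by omega)
        positivity
      · refine ⟨0, Finset.mem_range.2 (by omega), ?_⟩
        have h1 : (1:ℝ) ≤ (sigmaA μ (0+1) : ℝ) := by
          exact_mod_cast one_le_sigma hμ1 (by omega)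
        have := ih (n - 0) (by omega)
        positivity

lemma gauss (N : ℕ) : ∑ m ∈ Finset.range N, (m+1)*(m+2)*3 = N*(N+1)*(N+2) := by
  induction N with
  | zero => simp
  | succ n ih => rw [Finset.sum_range_succ, ih]; ring

lemma gauss' (n : ℕ) : ∑ j ∈ Finset.range (n+1), ((n-j)+1)*((n-j)+2)*3
    = (n+1)*(n+2)*(n+3) := by
  have := Finset.sum_range_reflect (fun m => (m+1)*(m+2)*3) (n+1)
  simpa using this.trans (gauss (n+1))

include hμ1 in
lemma fA_ge {x : ℝ} (hx : 3 ≤ x) : ∀ n, (((n+1)*(n+2) : ℕ) : ℝ)/2 ≤ fA μ n x := by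
  intro n
  induction n using Nat.strong_induction_on with
  | _ n ih =>
    match n with
    | 0 => rw [fA_zero]; norm_num
    | n + 1 =>
      rw [fA_succ]
      have hterm : ∀ j ∈ Finset.range (n+1),
          ((((n-j)+1)*((n-j)+2) : ℕ) : ℝ)/2 ≤ (sigmaA μ (j + 1) : ℝ) * fA μ (n - j) x := by
        intro j hj
        have h1 : (1:ℝ) ≤ (sigmaA μ (j+1) : ℝ) := by
          exact_mod_cast one_le_sigma hμ1 (by omega)
        have h2 := ih (n - j) (by omega)
        calc ((((n-j)+1)*((n-j)+2) : ℕ) : ℝ)/2 ≤ fA μ (n-j) x := h2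
        _ = 1 * fA μ (n-j) x := (one_mul _).symm
        _ ≤ (sigmaA μ (j+1) : ℝ) * fA μ (n-j) x := by
            apply mul_le_mul_of_nonneg_right h1
            have := fA_pos hμ1 (by linarith : (0:ℝ) < x) (n - j)
            linarith
      have hsum : (((n+1)*(n+2)*(n+3) : ℕ) : ℝ)/6
          ≤ ∑ j ∈ Finset.range (n+1), (sigmaA μ (j + 1) : ℝ) * fA μ (n - j) x := by
        calc (((n+1)*(n+2)*(n+3) : ℕ) : ℝ)/6
            = ((∑ j ∈ Finset.range (n+1), ((n-j)+1)*((n-j)+2)*3 : ℕ) : ℝ)/6 := by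
              rw [gauss']
        _ = ∑ j ∈ Finset.range (n+1), ((((n-j)+1)*((n-j)+2) : ℕ) : ℝ)/2 := by
              push_cast
              rw [Finset.sum_div]
              congr 1; funext j; ring
        _ ≤ _ := Finset.sum_le_sum hterm
      have hsum0 : (0:ℝ) ≤ ∑ j ∈ Finset.range (n+1), (sigmaA μ (j + 1) : ℝ) * fA μ (n - j) x := by
        refine le_trans ?_ hsum; positivity
      have hx0 : (0:ℝ) < (n:ℝ) + 1 := by positivity
      calc ((((n+1)+1)*((n+1)+2) : ℕ) : ℝ)/2
          = 3/((n:ℝ)+1) * (((((n+1)*(n+2)*(n+3) : ℕ)):ℝ)/6) := by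
            push_cast; field_simp; ring
      _ ≤ 3/((n:ℝ)+1) * ∑ j ∈ Finset.range (n+1), (sigmaA μ (j + 1) : ℝ) * fA μ (n - j) x := by
            apply mul_le_mul_of_nonneg_left hsum (by positivity)
      _ ≤ x/((n:ℝ)+1) * ∑ j ∈ Finset.range (n+1), (sigmaA μ (j + 1) : ℝ) * fA μ (n - j) x := by
            apply mul_le_mul_of_nonneg_right _ hsum0
            gcongr
      _ = x / ((n:ℕ)+1 : ℝ) * _ := by norm_num

include hμ1 in
lemma sigma_one : sigmaA μ 1 = 1 := by simp [sigmaA, hμ1]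

include hμ1 in
lemma sigma_ge {j : ℕ} (hj : 2 ≤ j) : 1 + j * μ j ≤ sigmaA μ j := by
  have h2 : ({1, j} : Finset ℕ) ⊆ Nat.divisors j := by
    intro d hd
    simp only [Finset.mem_insert, Finset.mem_singleton] at hd
    rcases hd with rfl | rfl
    · exact Nat.one_mem_divisors.2 (by omega)
    · exact Nat.mem_divisors_self _ (by omega)
  calc 1 + j * μ j = ∑ d ∈ ({1, j} : Finset ℕ), d * μ d := by
        rw [Finset.sum_pair (by omega : (1:ℕ) ≠ j), hμ1, mul_one]
  _ ≤ sigmaA μ j := Finset.sum_le_sum_of_subset h2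


include hμ1 hμ in
lemma key_nat {b : ℕ} (hb : 2 ≤ b) :
    2*b*(2*b + ∑ d ∈ Finset.Icc 1 b, d * μ d)
      < 3 * ∑ j ∈ Finset.range b, sigmaA μ (j+1) * ((b-j)*((b-j)+1)) := by
  set w : ℕ → ℕ := fun j => (b-j)*((b-j)+1) with hw
  -- Gauss: 3 * ∑_{j ∈ range b} w j = b(b+1)(b+2)
  have hgauss : ∑ j ∈ Finset.range b, w j * 3 = b*(b+1)*(b+2) := by
    have hrefl := Finset.sum_range_reflect (fun m => (m+1)*(m+2)*3) b
    rw [gauss b] at hrefl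
    rw [← hrefl]
    apply Finset.sum_congr rfl
    intro j hj
    have hjb : j < b := Finset.mem_range.1 hj
    have : b - 1 - j + 1 = b - j := by omega
    have h2 : b - 1 - j + 2 = (b - j) + 1 := by omega
    simp only [hw, this, h2]
  -- split sum at j = 0
  have hsplit : ∑ j ∈ Finset.range b, sigmaA μ (j+1) * w j
      = sigmaA μ 1 * w 0 + ∑ j ∈ Finset.Ico 1 b, sigmaA μ (j+1) * w j := by
    rw [Finset.range_eq_Ico, Finset.sum_eq_sum_Ico_succ_bot (by omega : 0 < b)]
  -- termwise lower bound on Ico 1 b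
  have hlow : ∑ j ∈ Finset.Ico 1 b, (1 + (j+1) * μ (j+1)) * w j
      ≤ ∑ j ∈ Finset.Ico 1 b, sigmaA μ (j+1) * w j := by
    apply Finset.sum_le_sum
    intro j hj
    have hj1 : 1 ≤ j := (Finset.mem_Ico.1 hj).1
    exact Nat.mul_le_mul_right _ (sigma_ge hμ1 (by omega))
  set T : ℕ := ∑ j ∈ Finset.Ico 1 b, (j+1) * μ (j+1) * w j with hT
  set M : ℕ := ∑ j ∈ Finset.Ico 1 b, (j+1) * μ (j+1) with hM
  -- rewrite the Icc sum as 1 + M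
  have hS : ∑ d ∈ Finset.Icc 1 b, d * μ d = 1 + M := by
    have : Finset.Icc 1 b = Finset.Ico 1 (b+1) := by ext d; simp [Nat.lt_succ_iff]
    rw [this, Finset.sum_eq_sum_Ico_succ_bot (by omega : 1 < b+1), hμ1, mul_one, hM]
    congr 1
    have h2 : Finset.Ico 2 (b+1) = Finset.image (fun j => j + 1) (Finset.Ico 1 b) := by
      ext d
      simp only [Finset.mem_Ico, Finset.mem_image]
      constructor
      · intro hd; exact ⟨d - 1, by omega, by omega⟩
      · rintro ⟨j, hj, rfl⟩; omega
    rw [h2, Finset.sum_image (by intro a _ b _ h; simp only at h; omega)]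
  -- expand lower bound
  have hexpand : ∑ j ∈ Finset.Ico 1 b, (1 + (j+1) * μ (j+1)) * w j
      = ∑ j ∈ Finset.Ico 1 b, w j + T := by
    rw [hT, ← Finset.sum_add_distrib]
    apply Finset.sum_congr rfl
    intro j _
    ring
  -- the deficit bound: 2*b*M ≤ 3*T + b^2*(b-2)
  set k : ℕ := (b-2)/2 with hk
  have hdef : 2*b*M ≤ 3*T + 2*b^2*k := by
    have hpt : ∀ j ∈ Finset.Ico 1 b,
        2*b*((j+1) * μ (j+1)) ≤ 3*((j+1) * μ (j+1) * w j)
          + (if b - k ≤ j then 2*b^2 else 0) := by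
      intro j hj
      obtain ⟨hj1, hjb⟩ := Finset.mem_Ico.1 hj
      by_cases hc : 2*b ≤ 3 * w j
      · calc 2*b*((j+1) * μ (j+1)) ≤ (3 * w j) * ((j+1) * μ (j+1)) :=
              Nat.mul_le_mul_right _ hc
        _ = 3*((j+1) * μ (j+1) * w j) := by ring
        _ ≤ _ := Nat.le_add_right _ _
      · push_neg at hc
        set t := b - j with ht
        have ht1 : 1 ≤ t := by omega
        have hwj : w j = t * (t+1) := rfl
        have h6 : 6 * t ≤ 3 * (t * (t+1)) := by nlinarith
        have h3t : 3 * t < b := by omega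
        have h2t : 2 * t ≤ b - 2 := by omega
        have hcond : b - k ≤ j := by omega
        rw [if_pos hcond]
        have : 2*b*((j+1) * μ (j+1)) ≤ 2*b^2 := by
          have hμj := hμ (j+1)
          have : (j+1) * μ (j+1) ≤ b := by
            calc (j+1) * μ (j+1) ≤ (j+1) * 1 := Nat.mul_le_mul_left _ hμj
            _ ≤ b := by omega
          nlinarith
        omega
    have hsum := Finset.sum_le_sum hpt
    rw [Finset.sum_add_distrib] at hsum
    have hite : (∑ j ∈ Finset.Ico 1 b, if b - k ≤ j then 2*b^2 else 0) ≤ 2*b^2*k := by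
      have hfil : (∑ j ∈ Finset.Ico 1 b, if b - k ≤ j then 2*b^2 else 0)
          = ∑ _j ∈ (Finset.Ico 1 b).filter (fun j => b - k ≤ j), 2*b^2 :=
        (Finset.sum_filter _ _).symm
      rw [hfil, Finset.sum_const, smul_eq_mul]
      have hsub : (Finset.Ico 1 b).filter (fun j => b - k ≤ j) ⊆ Finset.Ico (b-k) b := by
        intro j hj
        simp only [Finset.mem_filter, Finset.mem_Ico] at hj ⊢
        omega
      have hcard : ((Finset.Ico 1 b).filter (fun j => b - k ≤ j)).card ≤ k := by
        calc ((Finset.Ico 1 b).filter (fun j => b - k ≤ j)).card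
            ≤ (Finset.Ico (b-k) b).card := Finset.card_le_card hsub
        _ = b - (b - k) := Nat.card_Ico _ _
        _ ≤ k := by omega
      calc ((Finset.Ico 1 b).filter (fun j => b - k ≤ j)).card * (2*b^2)
          ≤ k * (2*b^2) := Nat.mul_le_mul_right _ hcard
      _ = 2*b^2*k := by ring
    have h3T : ∑ j ∈ Finset.Ico 1 b, 3*((j+1) * μ (j+1) * w j) = 3*T := by
      rw [hT, Finset.mul_sum]
    have h2bM : ∑ j ∈ Finset.Ico 1 b, 2*b*((j+1) * μ (j+1)) = 2*b*M := by
      rw [hM, Finset.mul_sum]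
    omega
  -- assemble
  have hw0 : sigmaA μ 1 * w 0 = b * (b+1) := by
    rw [sigma_one hμ1, one_mul, hw]; simp
  have hgauss2 : 3 * ∑ j ∈ Finset.range b, w j = b*(b+1)*(b+2) := by
    rw [← hgauss, Finset.mul_sum]
    apply Finset.sum_congr rfl
    intro j _; ring
  have hsplitw : ∑ j ∈ Finset.range b, w j = w 0 + ∑ j ∈ Finset.Ico 1 b, w j := by
    rw [Finset.range_eq_Ico, Finset.sum_eq_sum_Ico_succ_bot (by omega : 0 < b)]
  have hch : b*(b+1)*(b+2) + 3*T ≤ 3 * ∑ j ∈ Finset.range b, sigmaA μ (j+1) * w j := by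
    have h1 : ∑ j ∈ Finset.Ico 1 b, w j + T ≤ ∑ j ∈ Finset.Ico 1 b, sigmaA μ (j+1) * w j :=
      hexpand ▸ hlow
    have hw0' : w 0 = b * (b+1) := by rw [hw]; simp
    calc b*(b+1)*(b+2) + 3*T
        = 3 * (w 0 + ∑ j ∈ Finset.Ico 1 b, w j) + 3*T := by
          rw [← hsplitw, hgauss2]
    _ ≤ 3 * (w 0 + (∑ j ∈ Finset.Ico 1 b, w j + T)) + 3*T - 3*T := by omega
    _ ≤ 3 * (w 0 + ∑ j ∈ Finset.Ico 1 b, sigmaA μ (j+1) * w j) := by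
          have := Nat.add_le_add_left h1 (w 0)
          omega
    _ = 3 * (sigmaA μ 1 * w 0 + ∑ j ∈ Finset.Ico 1 b, sigmaA μ (j+1) * w j) := by
          rw [sigma_one hμ1, one_mul]
    _ = 3 * ∑ j ∈ Finset.range b, sigmaA μ (j+1) * w j := by rw [← hsplit]
  have hfinal : 2*b*(2*b + (1 + M)) < b*(b+1)*(b+2) + 3*T := by
    have hbpos : 1 ≤ b := by omega
    have hkb : 2*k + 2 ≤ b := by omega
    have hmul : b^2 * (2*k+2) ≤ b^2 * b := Nat.mul_le_mul_left _ hkb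
    nlinarith [hdef, hmul, sq_nonneg b]
  rw [hS]
  calc 2*b*(2*b + (1+M)) < b*(b+1)*(b+2) + 3*T := hfinal
  _ ≤ 3 * ∑ j ∈ Finset.range b, sigmaA μ (j+1) * w j := hch

include hμ in
lemma sigma_le {m b : ℕ} (hb : 1 ≤ b) (hm : m ≤ 2*b) :
    sigmaA μ m ≤ 2*b + ∑ d ∈ Finset.Icc 1 b, d * μ d := by
  classical
  rcases Nat.eq_zero_or_pos m with rfl | hm0
  · simp [sigmaA]
  have hsplit : Nat.divisors m = (Nat.divisors m).filter (· ≤ b) ∪ (Nat.divisors m).filter (¬ · ≤ b) :=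
    (Finset.filter_union_filter_not_eq _ _).symm
  rw [sigmaA, hsplit, Finset.sum_union (Finset.disjoint_filter_filter_not _ _ _)]
  have hA : ∑ d ∈ (Nat.divisors m).filter (· ≤ b), d * μ d ≤ ∑ d ∈ Finset.Icc 1 b, d * μ d := by
    apply Finset.sum_le_sum_of_subset
    intro d hd
    simp only [Finset.mem_filter, Nat.mem_divisors] at hd
    have : 1 ≤ d := Nat.pos_of_dvd_of_pos hd.1.1 hm0
    exact Finset.mem_Icc.2 ⟨this, hd.2⟩
  have hB : ∑ d ∈ (Nat.divisors m).filter (¬ · ≤ b), d * μ d ≤ 2*b := by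
    have hsub : (Nat.divisors m).filter (¬ · ≤ b) ⊆ {m} := by
      intro d hd
      simp only [Finset.mem_filter, Nat.mem_divisors, not_le] at hd
      obtain ⟨⟨hdvd, _⟩, hdb⟩ := hd
      rcases (Nat.le_of_dvd hm0 hdvd).lt_or_eq with hlt | rfl
      · exfalso
        obtain ⟨k, rfl⟩ := hdvd
        have hk : 2 ≤ k := by
          rcases Nat.lt_or_ge k 2 with hk | hk
          · interval_cases k <;> omega
          · exact hk
        have := Nat.mul_le_mul_left d hk
        omega
      · exact Finset.mem_singleton_self _
    calc ∑ d ∈ (Nat.divisors m).filter (¬ · ≤ b), d * μ d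
        ≤ ∑ d ∈ ({m} : Finset ℕ), d * μ d := Finset.sum_le_sum_of_subset hsub
    _ = m * μ m := Finset.sum_singleton _ _
    _ ≤ 2*b := by have := hμ m; nlinarith
  omega


include hμ1 hμ in
lemma fA_gt_S {x : ℝ} (hx : 3 ≤ x) {b : ℕ} (hb : 2 ≤ b) :
    ((2*b + ∑ d ∈ Finset.Icc 1 b, d * μ d : ℕ) : ℝ) < fA μ b x := by
  obtain ⟨m, rfl⟩ : ∃ m, b = m + 1 := ⟨b - 1, by omega⟩
  set W : ℕ := ∑ j ∈ Finset.range (m+1), sigmaA μ (j+1) * (((m+1)-j)*(((m+1)-j)+1)) with hWdef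
  have hW := key_nat hμ1 hμ hb
  rw [← hWdef] at hW
  have hsum_ge : ((W : ℕ) : ℝ)/2 ≤ ∑ j ∈ Finset.range (m+1), (sigmaA μ (j + 1) : ℝ) * fA μ (m - j) x := by
    have hterm : ∀ j ∈ Finset.range (m+1),
        ((sigmaA μ (j+1) * (((m+1)-j)*(((m+1)-j)+1)) : ℕ) : ℝ)/2
          ≤ (sigmaA μ (j + 1) : ℝ) * fA μ (m - j) x := by
      intro j hj
      have hjm : j ≤ m := by simpa [Nat.lt_succ_iff] using hj
      have hidx : ((m - j) + 1) * ((m - j) + 2) = ((m+1)-j)*(((m+1)-j)+1) := by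
        have e1 : (m-j)+1 = (m+1)-j := by omega
        have e2 : (m-j)+2 = ((m+1)-j)+1 := by omega
        rw [e1, e2]
      have h2 := fA_ge hμ1 hx (m - j)
      rw [hidx] at h2
      have hσ : (0:ℝ) ≤ (sigmaA μ (j+1) : ℝ) := by positivity
      calc ((sigmaA μ (j+1) * (((m+1)-j)*(((m+1)-j)+1)) : ℕ) : ℝ)/2
          = (sigmaA μ (j+1) : ℝ) * ((((((m+1)-j)*(((m+1)-j)+1)) : ℕ)):ℝ)/2 := by
            push_cast; ring
      _ ≤ (sigmaA μ (j+1) : ℝ) * fA μ (m - j) x := by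
            rw [mul_div_assoc]
            exact mul_le_mul_of_nonneg_left h2 hσ
    calc ((W : ℕ) : ℝ)/2
        = ∑ j ∈ Finset.range (m+1), ((sigmaA μ (j+1) * (((m+1)-j)*(((m+1)-j)+1)) : ℕ) : ℝ)/2 := by
          rw [hWdef]; push_cast; rw [Finset.sum_div]
    _ ≤ _ := Finset.sum_le_sum hterm
  have hb0 : (0:ℝ) < (m:ℝ) + 1 := by positivity
  have hW0 : (0:ℝ) ≤ (W:ℝ) := by positivity
  have hcast : ((2*(m+1)*(2*(m+1) + ∑ d ∈ Finset.Icc 1 (m+1), d * μ d) : ℕ) : ℝ) < ((3 * W : ℕ) : ℝ) := by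
    exact_mod_cast hW
  push_cast at hcast
  calc ((2*(m+1) + ∑ d ∈ Finset.Icc 1 (m+1), d * μ d : ℕ) : ℝ)
      < 3/((m:ℝ)+1) * ((W:ℝ)/2) := by
        push_cast
        rw [div_mul_eq_mul_div, lt_div_iff₀ hb0]
        nlinarith [hcast]
  _ ≤ x/((m:ℝ)+1) * ((W:ℝ)/2) := by gcongr
  _ ≤ x/((m:ℝ)+1) * ∑ j ∈ Finset.range (m+1), (sigmaA μ (j + 1) : ℝ) * fA μ (m - j) x := by
        apply mul_le_mul_of_nonneg_left hsum_ge (by positivity)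
  _ = fA μ (m+1) x := by rw [fA_succ]

include hμ1 in
lemma fA_one (x : ℝ) : fA μ 1 x = x := by
  rw [fA_succ]
  simp [sigmaA, hμ1, fA_zero]

include hμ1 in
lemma fA_sum_eq {x : ℝ} (hx : x ≠ 0) {b : ℕ} (hb : 1 ≤ b) :
    ∑ j ∈ Finset.range b, (sigmaA μ (j+1) : ℝ) * fA μ ((b-1) - j) x
      = (b : ℝ) * fA μ b x / x := by
  obtain ⟨c, rfl⟩ : ∃ c, b = c + 1 := ⟨b-1, by omega⟩
  simp only [Nat.add_sub_cancel]
  rw [fA_succ]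
  field_simp
  norm_num

include hμ1 hμ in
lemma bo_main : ∀ n a b : ℕ, 1 ≤ a → 1 ≤ b → a + b = n → ∀ x : ℝ, 3 ≤ x →
    fA μ n x ≤ fA μ a x * fA μ b x ∧ (3 ≤ n → fA μ n x < fA μ a x * fA μ b x) := by
  intro n
  induction n using Nat.strong_induction_on with
  | _ n ih =>
  have aux : ∀ a b : ℕ, 1 ≤ a → a ≤ b → a + b = n → ∀ x : ℝ, 3 ≤ x →
      fA μ n x ≤ fA μ a x * fA μ b x ∧ (3 ≤ n → fA μ n x < fA μ a x * fA μ b x) := by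
    intro a b ha hab habn x hx
    have hx0 : (0:ℝ) < x := by linarith
    have hxne : x ≠ 0 := ne_of_gt hx0
    have hb1 : 1 ≤ b := le_trans ha hab
    by_cases hn3 : 3 ≤ n
    · -- main case
      have hb2 : 2 ≤ b := by omega
      obtain ⟨m, rfl⟩ : ∃ m, n = m + 1 := ⟨n-1, by omega⟩
      have hm2 : 2 ≤ m := by omega
      have hba : b - 1 ≤ m + 1 := by omega
      have hbm : b ≤ m := by omega
      -- termwise bound on the first part via IH
      have key1 : ∀ j ∈ Finset.Ico 0 (b-1),
          (sigmaA μ (j+1) : ℝ) * fA μ (m - j) x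
            ≤ (sigmaA μ (j+1) : ℝ) * (fA μ a x * fA μ (b-1-j) x) := by
        intro j hj
        have hj' : j < b - 1 := (Finset.mem_Ico.1 hj).2
        have hIH := (ih (m - j) (by omega) a (b-1-j) ha (by omega) (by omega) x hx).1
        exact mul_le_mul_of_nonneg_left hIH (by positivity)
      -- the tail strict bound
      have key2 : ∀ j ∈ Finset.Ico b (m+1),
          (sigmaA μ (j+1) : ℝ) * fA μ (m - j) x
            < (fA μ b x * (sigmaA μ (j+1-b) : ℝ)) * fA μ (m - j) x := by
        intro j hj
        obtain ⟨hjb, hjm⟩ := Finset.mem_Ico.1 hj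
        have h1 : (sigmaA μ (j+1) : ℝ) ≤ ((2*b + ∑ d ∈ Finset.Icc 1 b, d * μ d : ℕ) : ℝ) := by
          exact_mod_cast sigma_le hμ (by omega) (by omega)
        have h2 := fA_gt_S hμ1 hμ hx hb2
        have h3 : (1:ℝ) ≤ (sigmaA μ (j+1-b) : ℝ) := by
          exact_mod_cast one_le_sigma hμ1 (by omega)
        have h4 : 0 < fA μ (m-j) x := fA_pos hμ1 hx0 _
        have h5 : 0 < fA μ b x := fA_pos hμ1 hx0 _
        have : (sigmaA μ (j+1) : ℝ) < fA μ b x * (sigmaA μ (j+1-b) : ℝ) := by nlinarith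
        exact mul_lt_mul_of_pos_right this h4
      -- identify the pieces
      have hT1 : ∑ j ∈ Finset.Ico 0 (b-1), (sigmaA μ (j+1) : ℝ) * fA μ (b-1-j) x
          = (b:ℝ) * fA μ b x / x - (sigmaA μ b : ℝ) := by
        have hcons := Finset.sum_Ico_consecutive
          (f := fun j => (sigmaA μ (j+1) : ℝ) * fA μ (b-1-j) x)
          (by omega : 0 ≤ b-1) (by omega : b-1 ≤ b)
        have hfull : ∑ j ∈ Finset.Ico 0 b, (sigmaA μ (j+1) : ℝ) * fA μ (b-1-j) x
            = (b:ℝ) * fA μ b x / x := by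
          rw [← Finset.range_eq_Ico]
          exact fA_sum_eq hμ1 hxne hb1
        have hsingle : ∑ j ∈ Finset.Ico (b-1) b, (sigmaA μ (j+1) : ℝ) * fA μ (b-1-j) x
            = (sigmaA μ b : ℝ) := by
          have hset : Finset.Ico (b-1) b = {b-1} := by
            ext j; simp only [Finset.mem_Ico, Finset.mem_singleton]; omega
          rw [hset, Finset.sum_singleton]
          have e1 : b - 1 + 1 = b := by omega
          have e2 : b - 1 - (b-1) = 0 := by omega
          rw [e1, e2, fA_zero, mul_one]
        rw [hfull, hsingle] at hcons
        linarith
      have hU : ∑ j ∈ Finset.Ico b (m+1), (sigmaA μ (j+1-b) : ℝ) * fA μ (m - j) x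
          = (a:ℝ) * fA μ a x / x := by
        have himg : Finset.Ico b (m+1) = Finset.image (fun j => j + b) (Finset.range a) := by
          ext j
          simp only [Finset.mem_Ico, Finset.mem_image, Finset.mem_range]
          constructor
          · intro hj; exact ⟨j - b, by omega, by omega⟩
          · rintro ⟨i, hi, rfl⟩; omega
        rw [himg, Finset.sum_image (by intro i _ i' _ h; simp only at h; omega)]
        have : ∀ i ∈ Finset.range a, (sigmaA μ (i + b + 1 - b) : ℝ) * fA μ (m - (i + b)) x
            = (sigmaA μ (i+1) : ℝ) * fA μ ((a-1) - i) x := by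
          intro i hi
          have hia : i < a := Finset.mem_range.1 hi
          have e1 : i + b + 1 - b = i + 1 := by omega
          have e2 : m - (i + b) = (a-1) - i := by omega
          rw [e1, e2]
        rw [Finset.sum_congr rfl this]
        exact fA_sum_eq hμ1 hxne ha
      -- assemble
      have hsplit : ∑ j ∈ Finset.range (m+1), (sigmaA μ (j+1) : ℝ) * fA μ (m - j) x
          = ∑ j ∈ Finset.Ico 0 (b-1), (sigmaA μ (j+1) : ℝ) * fA μ (m - j) x
            + ∑ j ∈ Finset.Ico (b-1) (m+1), (sigmaA μ (j+1) : ℝ) * fA μ (m - j) x := by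
        rw [Finset.range_eq_Ico,
          ← Finset.sum_Ico_consecutive _ (by omega : 0 ≤ b-1) hba]
      have hS2 : ∑ j ∈ Finset.Ico (b-1) (m+1), (sigmaA μ (j+1) : ℝ) * fA μ (m - j) x
          = (sigmaA μ b : ℝ) * fA μ a x
            + ∑ j ∈ Finset.Ico b (m+1), (sigmaA μ (j+1) : ℝ) * fA μ (m - j) x := by
        rw [Finset.sum_eq_sum_Ico_succ_bot (by omega : b-1 < m+1)]
        have e1 : b - 1 + 1 = b := by omega
        have e2 : m - (b-1) = a := by omega
        rw [e1, e2]
      have hS1 : ∑ j ∈ Finset.Ico 0 (b-1), (sigmaA μ (j+1) : ℝ) * fA μ (m - j) x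
          ≤ fA μ a x * ((b:ℝ) * fA μ b x / x - (sigmaA μ b : ℝ)) := by
        calc ∑ j ∈ Finset.Ico 0 (b-1), (sigmaA μ (j+1) : ℝ) * fA μ (m - j) x
            ≤ ∑ j ∈ Finset.Ico 0 (b-1), (sigmaA μ (j+1) : ℝ) * (fA μ a x * fA μ (b-1-j) x) :=
              Finset.sum_le_sum key1
        _ = fA μ a x * ∑ j ∈ Finset.Ico 0 (b-1), (sigmaA μ (j+1) : ℝ) * fA μ (b-1-j) x := by
              rw [Finset.mul_sum]
              exact Finset.sum_congr rfl (fun j _ => by ring)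
        _ = fA μ a x * ((b:ℝ) * fA μ b x / x - (sigmaA μ b : ℝ)) := by rw [hT1]
      have hS2tail : ∑ j ∈ Finset.Ico b (m+1), (sigmaA μ (j+1) : ℝ) * fA μ (m - j) x
          < fA μ b x * ((a:ℝ) * fA μ a x / x) := by
        have hne : (Finset.Ico b (m+1)).Nonempty := ⟨b, Finset.mem_Ico.2 ⟨le_refl _, by omega⟩⟩
        calc ∑ j ∈ Finset.Ico b (m+1), (sigmaA μ (j+1) : ℝ) * fA μ (m - j) x
            < ∑ j ∈ Finset.Ico b (m+1), (fA μ b x * (sigmaA μ (j+1-b) : ℝ)) * fA μ (m - j) x :=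
              Finset.sum_lt_sum_of_nonempty hne key2
        _ = fA μ b x * ∑ j ∈ Finset.Ico b (m+1), (sigmaA μ (j+1-b) : ℝ) * fA μ (m - j) x := by
              rw [Finset.mul_sum]
              exact Finset.sum_congr rfl (fun j _ => by ring)
        _ = fA μ b x * ((a:ℝ) * fA μ a x / x) := by rw [hU]
      have hstrict : fA μ (m+1) x < fA μ a x * fA μ b x := by
        rw [fA_succ]
        have hSbound : ∑ j ∈ Finset.range (m+1), (sigmaA μ (j+1) : ℝ) * fA μ (m - j) x
            < ((m:ℝ)+1)/x * (fA μ a x * fA μ b x) := by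
          rw [hsplit, hS2]
          have hcast : (a:ℝ) + (b:ℝ) = (m:ℝ) + 1 := by exact_mod_cast congrArg (Nat.cast : ℕ → ℝ) habn
          calc ∑ j ∈ Finset.Ico 0 (b-1), (sigmaA μ (j+1) : ℝ) * fA μ (m - j) x
              + ((sigmaA μ b : ℝ) * fA μ a x
                + ∑ j ∈ Finset.Ico b (m+1), (sigmaA μ (j+1) : ℝ) * fA μ (m - j) x)
              < fA μ a x * ((b:ℝ) * fA μ b x / x - (sigmaA μ b : ℝ))
                + ((sigmaA μ b : ℝ) * fA μ a x + fA μ b x * ((a:ℝ) * fA μ a x / x)) := by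
                  linarith
          _ = ((m:ℝ)+1)/x * (fA μ a x * fA μ b x) := by
                rw [← hcast]; field_simp; ring
        calc x/((m:ℝ)+1) * ∑ j ∈ Finset.range (m+1), (sigmaA μ (j+1) : ℝ) * fA μ (m - j) x
            < x/((m:ℝ)+1) * (((m:ℝ)+1)/x * (fA μ a x * fA μ b x)) := by
              apply mul_lt_mul_of_pos_left hSbound (by positivity)
        _ = fA μ a x * fA μ b x := by field_simp
      exact ⟨hstrict.le, fun _ => hstrict⟩
    · -- base case n = 2
      have ha1 : a = 1 := by omega
      have hb1' : b = 1 := by omega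
      have hn2 : n = 2 := by omega
      subst ha1 hb1' hn2
      refine ⟨?_, by omega⟩
      have hf2 : fA μ 2 x = x/2 * (x + (sigmaA μ 2 : ℝ)) := by
        rw [fA_succ]
        norm_num [Finset.sum_range_succ, fA_zero]
        rw [fA_one hμ1, sigma_one hμ1]
        norm_num
      rw [hf2, fA_one hμ1]
      have hσ2 : (sigmaA μ 2 : ℝ) ≤ 3 := by
        have h2 : sigmaA μ 2 = 1 * μ 1 + 2 * μ 2 := by
          rw [sigmaA, Nat.Prime.divisors Nat.prime_two,
            Finset.sum_pair (by norm_num : (1:ℕ) ≠ 2)]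
        have := hμ 2
        have : sigmaA μ 2 ≤ 3 := by rw [h2, hμ1]; omega
        exact_mod_cast this
      nlinarith
  intro a b ha hb habn x hx
  rcases le_total a b with h | h
  · exact aux a b ha h habn x hx
  · have H := aux b a hb h (by omega) x hx
    rw [mul_comm] at H
    exact H

include hμ1 hμ in
lemma sigma2_eq : sigmaA μ 2 = 1 + 2 * μ 2 := by
  rw [sigmaA, Nat.Prime.divisors Nat.prime_two,
    Finset.sum_pair (by norm_num : (1:ℕ) ≠ 2), hμ1]

include hμ1 hμ in
lemma fA_two (x : ℝ) : fA μ 2 x = x/2 * (x + (sigmaA μ 2 : ℝ)) := by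
  rw [fA_succ]
  norm_num [Finset.sum_range_succ, fA_zero]
  rw [fA_one hμ1, sigma_one hμ1]
  norm_num

end

/-- Polynomization of the Bessenrodt-Ono inequality for a set A of positive integers with 1 in A: f_{A,a}(x) f_{A,b}(x) > f_{A,a+b}(x) for all real x >= 3 and a, b >= 1 except a = b = 1; for a = b = 1, f_{A,1}(3)^2 >= f_{A,2}(3) (equality iff 2 in A) and f_{A,1}(x)^2 > f_{A,2}(x) for x > 3. -/
theorem stmt_12 (A : Set ℕ) (h0 : 0 ∉ A) (h1 : 1 ∈ A) :
    (∀ a b : ℕ, 1 ≤ a → 1 ≤ b → ¬(a = 1 ∧ b = 1) → ∀ x : ℝ, 3 ≤ x →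
      fS A a x * fS A b x > fS A (a + b) x) ∧
    fS A 1 3 * fS A 1 3 ≥ fS A 2 3 ∧
    (fS A 1 3 * fS A 1 3 = fS A 2 3 ↔ 2 ∈ A) ∧
    (∀ x : ℝ, 3 < x → fS A 1 x * fS A 1 x > fS A 2 x) := by
  set μ : ℕ → ℕ := fun a => if a ∈ A then 1 else 0 with hμdef
  have hfS : fS A = fA μ := rfl
  have hμ1 : μ 1 = 1 := by simp [hμdef, h1]
  have hμ : ∀ d, μ d ≤ 1 := by
    intro d; simp only [hμdef]; split <;> norm_num
  have hσ2n : sigmaA μ 2 = 1 + 2 * μ 2 := sigma2_eq hμ1 hμ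
  have hσ2le : (sigmaA μ 2 : ℝ) ≤ 3 := by
    have := hμ 2
    have : sigmaA μ 2 ≤ 3 := by omega
    exact_mod_cast this
  refine ⟨?_, ?_, ?_, ?_⟩
  · intro a b ha hb hne x hx
    have h3 : 3 ≤ a + b := by omega
    have := (bo_main hμ1 hμ (a+b) a b ha hb rfl x hx).2 h3
    rw [hfS]
    exact this
  · rw [hfS, fA_one hμ1, fA_two hμ1 hμ]
    nlinarith [hσ2le]
  · rw [hfS, fA_one hμ1, fA_two hμ1 hμ]
    constructor
    · intro h
      have hσ3 : (sigmaA μ 2 : ℝ) = 3 := by nlinarith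
      have hσ3' : sigmaA μ 2 = 3 := by exact_mod_cast hσ3
      have hμ2 : μ 2 = 1 := by omega
      by_contra h2
      simp [hμdef, h2] at hμ2
    · intro h2
      have hμ2 : μ 2 = 1 := by simp [hμdef, h2]
      have : sigmaA μ 2 = 3 := by omega
      rw [this]
      norm_num
  · intro x hx
    rw [hfS, fA_one hμ1, fA_two hμ1 hμ]
    nlinarith [hσ2le]
end

section
/- Let B be a multiset of positive integers such that 1 ∈ B and every element of B has multiplicity exactly 3 except that it contains 1 with multiplicity 3 as well (i.e., B consists of elements each occurring exactly 3 times, with 1 among them). Then the B-partition function satisfies p_B(a)·p_B(b) > p_B(a+b) for all positive integers a, b, except possibly a = b = 1 when 2 ∈ B. -/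
open scoped Classical

namespace Stmt13Aux

open Finset

set_option linter.unusedSectionVars false

def cc : ℕ → ℕ
  | 0 => 1
  | n+1 => cc n + (n+2)

lemma cc_two_mul (n : ℕ) : 2 * cc n = (n+1)*(n+2) := by
  induction n with
  | zero => rfl
  | succ n ih => simp only [cc]; ring_nf; ring_nf at ih; omega

lemma cc_ge (n : ℕ) : n + 1 ≤ cc n := by
  induction n with
  | zero => simp [cc]
  | succ n ih => simp only [cc]; omega

lemma sum_cc (N : ℕ) : 3 * ∑ k ∈ range N, cc k = N * cc N := by
  induction N with
  | zero => simp
  | succ N ih =>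
      rw [Finset.sum_range_succ, Nat.mul_add, ih]
      have h1 := cc_two_mul N
      have h2 := cc_two_mul (N+1)
      have : cc (N+1) = cc N + (N+2) := rfl
      nlinarith

variable (μ : ℕ → ℕ)

def ind (d : ℕ) : ℕ := if μ d = 0 then 0 else 1

def TT (m : ℕ) : ℕ := ∑ d ∈ Nat.divisors m, ind μ d * d

def LL (n : ℕ) : ℕ := cc n + 3 * ∑ d ∈ Finset.Icc 2 n, ind μ d * cc (n - d)

lemma ind_le_one (d : ℕ) : ind μ d ≤ 1 := by unfold ind; split <;> omega

variable (hμ : ∀ j, μ j = 0 ∨ μ j = 3) (hμ1 : μ 1 = 3)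

include hμ in
lemma sigma_eq (m : ℕ) : sigmaA μ m = 3 * TT μ m := by
  unfold sigmaA TT
  rw [Finset.mul_sum]
  refine Finset.sum_congr rfl fun d _ => ?_
  rcases hμ d with h | h <;> simp [ind, h] <;> ring

include hμ1 in
lemma ind_one : ind μ 1 = 1 := by simp [ind, hμ1]

include hμ1 in
lemma TT_ge_one (m : ℕ) (hm : 1 ≤ m) : 1 ≤ TT μ m := by
  unfold TT
  calc 1 = ind μ 1 * 1 := by rw [ind_one μ hμ1]
  _ ≤ _ := Finset.single_le_sum (f := fun d => ind μ d * d) (fun i _ => Nat.zero_le _)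
      (Nat.one_mem_divisors.mpr (by omega))

lemma erase_divisors (j n : ℕ) (hj : j ≤ n) :
    (Nat.divisors (j+1)).erase 1 = (Finset.Icc 2 (n+1)).filter (· ∣ (j+1)) := by
  ext d
  simp only [Finset.mem_erase, Nat.mem_divisors, Finset.mem_filter, Finset.mem_Icc]
  constructor
  · rintro ⟨h1, h2, -⟩
    have hd1 : 1 ≤ d := Nat.pos_of_dvd_of_pos h2 (Nat.succ_pos j)
    have hd2 : d ≤ j + 1 := Nat.le_of_dvd (Nat.succ_pos j) h2
    exact ⟨⟨by omega, by omega⟩, h2⟩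
  · rintro ⟨⟨h1, h2⟩, h3⟩
    exact ⟨by omega, h3, by omega⟩

include hμ1 in
lemma TT_split (j n : ℕ) (hj : j ≤ n) :
    TT μ (j+1) = 1 + ∑ d ∈ Finset.Icc 2 (n+1), if d ∣ (j+1) then ind μ d * d else 0 := by
  unfold TT
  rw [← Finset.add_sum_erase _ _ (Nat.one_mem_divisors.mpr (Nat.succ_ne_zero j)),
      erase_divisors j n hj, Finset.sum_filter, ind_one μ hμ1, one_mul]

lemma LL_split (m n : ℕ) (hm : m ≤ n + 1) :
    LL μ m = cc m + 3 * ∑ d ∈ Finset.Icc 2 (n+1), if d ≤ m then ind μ d * cc (m - d) else 0 := by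
  unfold LL
  congr 2
  rw [← Finset.sum_filter]
  apply Finset.sum_congr
  · ext d; simp only [Finset.mem_filter, Finset.mem_Icc]; omega
  · intros; rfl

include hμ1 in
lemma key_sum (n : ℕ) :
    (n+1) * LL μ (n+1) ≤ ∑ j ∈ range (n+1), 3 * TT μ (j+1) * LL μ (n-j) := by
  set I := Finset.Icc 2 (n+1) with hI
  -- termwise lower bound
  have hterm : ∀ j ∈ range (n+1),
      3 * cc (n-j) + 9 * (∑ d ∈ I, if d ≤ n-j then ind μ d * cc (n-j-d) else 0)
        + 3 * (∑ d ∈ I, if d ∣ (j+1) then ind μ d * d * cc (n-j) else 0)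
      ≤ 3 * TT μ (j+1) * LL μ (n-j) := by
    intro j hj
    rw [Finset.mem_range] at hj
    have hjn : j ≤ n := by omega
    rw [TT_split μ hμ1 j n hjn, LL_split μ (n-j) n (by omega)]
    set r := ∑ d ∈ I, if d ∣ (j+1) then ind μ d * d else 0 with hr
    set s := ∑ d ∈ I, if d ≤ n-j then ind μ d * cc (n-j-d) else 0 with hs
    have h3 : (∑ d ∈ I, if d ∣ (j+1) then ind μ d * d * cc (n-j) else 0) = r * cc (n-j) := by
      rw [hr, Finset.sum_mul]
      refine Finset.sum_congr rfl fun d _ => ?_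
      split <;> simp
    rw [h3]
    have : 3 * (1 + r) * (cc (n-j) + 3 * s)
        = 3 * cc (n-j) + 9 * s + 3 * (r * cc (n-j)) + 9 * (r * s) := by ring
    omega
  calc (n+1) * LL μ (n+1)
      ≤ ∑ j ∈ range (n+1), (3 * cc (n-j)
          + 9 * (∑ d ∈ I, if d ≤ n-j then ind μ d * cc (n-j-d) else 0)
          + 3 * (∑ d ∈ I, if d ∣ (j+1) then ind μ d * d * cc (n-j) else 0)) := by
        rw [Finset.sum_add_distrib, Finset.sum_add_distrib]
        -- first piece
        have e1 : ∑ j ∈ range (n+1), 3 * cc (n-j) = (n+1) * cc (n+1) := by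
          rw [← Finset.mul_sum]
          have : ∑ j ∈ range (n+1), cc (n-j) = ∑ j ∈ range (n+1), cc j := by
            have := Finset.sum_range_reflect cc (n+1)
            simpa using this
          rw [this, sum_cc]
        -- second piece
        have e2 : ∑ j ∈ range (n+1), 9 * (∑ d ∈ I, if d ≤ n-j then ind μ d * cc (n-j-d) else 0)
            = ∑ d ∈ I, 3 * ind μ d * ((n+1-d) * cc (n+1-d)) := by
          rw [← Finset.mul_sum, Finset.sum_comm]
          rw [Finset.mul_sum]
          refine Finset.sum_congr rfl fun d hd => ?_
          rw [hI, Finset.mem_Icc] at hd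
          have hfil : ∑ j ∈ range (n+1), (if d ≤ n-j then ind μ d * cc (n-j-d) else 0)
              = ∑ j ∈ range (n+1-d), ind μ d * cc (n-j-d) := by
            rw [← Finset.sum_filter]
            apply Finset.sum_congr
            · ext j; simp only [Finset.mem_filter, Finset.mem_range]; omega
            · intros; rfl
          rw [hfil]
          have hrefl : ∑ j ∈ range (n+1-d), cc (n-j-d) = ∑ k ∈ range (n+1-d), cc k := by
            have := Finset.sum_range_reflect cc (n+1-d)
            rw [← this]
            refine Finset.sum_congr rfl fun j hj => ?_
            congr 1
            omega
          rw [← Finset.mul_sum, hrefl]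
          have := sum_cc (n+1-d)
          nlinarith [this]
        -- third piece
        have e3 : ∑ d ∈ I, 3 * (ind μ d * d * cc (n+1-d))
            ≤ ∑ j ∈ range (n+1), 3 * (∑ d ∈ I, if d ∣ (j+1) then ind μ d * d * cc (n-j) else 0) := by
          rw [← Finset.mul_sum, ← Finset.mul_sum, Finset.sum_comm]
          apply Nat.mul_le_mul_left
          apply Finset.sum_le_sum
          intro d hd
          rw [hI, Finset.mem_Icc] at hd
          have hmem : d - 1 ∈ range (n+1) := by rw [Finset.mem_range]; omega
          have hdvd : d ∣ (d - 1 + 1) := by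
            have : d - 1 + 1 = d := by omega
            rw [this]
          calc ind μ d * d * cc (n+1-d)
              = (if d ∣ (d-1+1) then ind μ d * d * cc (n-(d-1)) else 0) := by
                rw [if_pos hdvd]
                congr 2
                omega
            _ ≤ ∑ j ∈ range (n+1), if d ∣ (j+1) then ind μ d * d * cc (n-j) else 0 :=
                Finset.single_le_sum (f := fun j => if d ∣ (j+1) then ind μ d * d * cc (n-j) else 0)
                  (fun i _ => by positivity) hmem
        -- combine
        have etot : (n+1) * LL μ (n+1)
            = (n+1) * cc (n+1) + (∑ d ∈ I, 3 * ind μ d * ((n+1-d) * cc (n+1-d))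
              + ∑ d ∈ I, 3 * (ind μ d * d * cc (n+1-d))) := by
          unfold LL
          rw [← Finset.sum_add_distrib, Nat.mul_add, Finset.mul_sum, Finset.mul_sum]
          congr 1
          refine Finset.sum_congr rfl fun d hd => ?_
          rw [hI, Finset.mem_Icc] at hd
          set e := n + 1 - d with he
          have hed : e + d = n + 1 := by omega
          rw [← hed]
          ring
        rw [etot, e1, e2]
        omega
    _ ≤ _ := Finset.sum_le_sum hterm


include hμ hμ1 in
lemma TT_lt (x y : ℕ) (hx : 1 ≤ x) (hxy : x ≤ y) (hexc : ¬(x = 1 ∧ y = 1 ∧ μ 2 = 3)) :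
    TT μ (x + y) < LL μ y := by
  rcases le_or_gt 4 y with hy4 | hy4
  · -- general case y ≥ 4
    set m := x + y with hm
    have hm2 : 2 ≤ m := by omega
    have hmy : y < m := by omega
    have hm2y : m ≤ 2 * y := by omega
    have h1mem : 1 ∈ Nat.divisors m := Nat.one_mem_divisors.mpr (by omega)
    have hmmem : m ∈ (Nat.divisors m).erase 1 :=
      Finset.mem_erase.mpr ⟨by omega, Nat.mem_divisors_self m (by omega)⟩
    have hTT : TT μ m = 1 + (ind μ m * m
        + ∑ d ∈ ((Nat.divisors m).erase 1).erase m, ind μ d * d) := by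
      rw [TT, ← Finset.add_sum_erase _ _ h1mem, ind_one μ hμ1, one_mul,
        ← Finset.add_sum_erase _ _ hmmem]
    set S := ((Nat.divisors m).erase 1).erase m with hS
    have hSfacts : ∀ d ∈ S, d ∣ m ∧ 2 ≤ d ∧ d < m := by
      intro d hd
      rw [hS, Finset.mem_erase, Finset.mem_erase, Nat.mem_divisors] at hd
      obtain ⟨hdm, hd1, hdvd, -⟩ := hd
      have hd0 : 1 ≤ d := Nat.pos_of_dvd_of_pos hdvd (by omega)
      have hdle : d ≤ m := Nat.le_of_dvd (by omega) hdvd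
      exact ⟨hdvd, by omega, by omega⟩
    have hsplit : ∑ d ∈ S, ind μ d * d
        = ∑ d ∈ S.filter (fun d => 2 * d = m), ind μ d * d
          + ∑ d ∈ S.filter (fun d => ¬(2 * d = m)), ind μ d * d :=
      (Finset.sum_filter_add_sum_filter_not S _ _).symm
    -- bad part: at most the single divisor m/2, value ≤ y
    have hbad : ∑ d ∈ S.filter (fun d => 2 * d = m), ind μ d * d ≤ y := by
      have hsub : S.filter (fun d => 2 * d = m) ⊆ {m / 2} := by
        intro d hd
        rw [Finset.mem_filter] at hd
        rw [Finset.mem_singleton]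
        omega
      calc ∑ d ∈ S.filter (fun d => 2 * d = m), ind μ d * d
          ≤ ∑ d ∈ ({m / 2} : Finset ℕ), ind μ d * d := Finset.sum_le_sum_of_subset hsub
        _ = ind μ (m/2) * (m/2) := Finset.sum_singleton _ _
        _ ≤ 1 * (m/2) := Nat.mul_le_mul_right _ (ind_le_one μ _)
        _ ≤ y := by omega
    -- good part
    have hgoodfacts : ∀ d ∈ S.filter (fun d => ¬(2 * d = m)), 3 * d ≤ m := by
      intro d hd
      rw [Finset.mem_filter] at hd
      obtain ⟨hdS, hne⟩ := hd
      obtain ⟨hdvd, hd2, hdm⟩ := hSfacts d hdS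
      obtain ⟨k, hk⟩ := hdvd
      have hk1 : k ≠ 1 := by rintro rfl; omega
      have hk2 : k ≠ 2 := by rintro rfl; omega
      have hk0 : k ≠ 0 := by rintro rfl; omega
      have : 3 ≤ k := by omega
      nlinarith
    have hgood : ∑ d ∈ S.filter (fun d => ¬(2 * d = m)), ind μ d * d
        ≤ 3 * ∑ d ∈ Finset.Icc 2 y, ind μ d * cc (y - d) := by
      calc ∑ d ∈ S.filter (fun d => ¬(2 * d = m)), ind μ d * d
          ≤ ∑ d ∈ S.filter (fun d => ¬(2 * d = m)), 3 * (ind μ d * cc (y - d)) := by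
            apply Finset.sum_le_sum
            intro d hd
            have h3d := hgoodfacts d hd
            rw [Finset.mem_filter] at hd
            obtain ⟨hdvd, hd2, hdm⟩ := hSfacts d hd.1
            have hcc := cc_ge (y - d)
            have hdle : d ≤ 3 * cc (y - d) := by omega
            calc ind μ d * d ≤ ind μ d * (3 * cc (y - d)) := Nat.mul_le_mul_left _ hdle
              _ = 3 * (ind μ d * cc (y - d)) := by ring
        _ ≤ ∑ d ∈ Finset.Icc 2 y, 3 * (ind μ d * cc (y - d)) := by
            apply Finset.sum_le_sum_of_subset
            intro d hd
            have h3d := hgoodfacts d hd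
            rw [Finset.mem_filter] at hd
            obtain ⟨hdvd, hd2, hdm⟩ := hSfacts d hd.1
            rw [Finset.mem_Icc]
            omega
        _ = 3 * ∑ d ∈ Finset.Icc 2 y, ind μ d * cc (y - d) := (Finset.mul_sum _ _ _).symm
    have hccy : 1 + m + y < cc y := by
      have := cc_two_mul y
      nlinarith
    have him : ind μ m * m ≤ m := by
      calc ind μ m * m ≤ 1 * m := Nat.mul_le_mul_right _ (ind_le_one μ _)
        _ = m := one_mul m
    rw [LL]
    omega
  · -- small cases y ≤ 3
    have hd2 : Nat.divisors 2 = {1, 2} := by decide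
    have hd3 : Nat.divisors 3 = {1, 3} := by decide
    have hd4 : Nat.divisors 4 = {1, 2, 4} := by decide
    have hd5 : Nat.divisors 5 = {1, 5} := by decide
    have hd6 : Nat.divisors 6 = {1, 2, 3, 6} := by decide
    have hi1 : Finset.Icc 2 1 = (∅ : Finset ℕ) := by decide
    have hi2 : Finset.Icc 2 2 = {2} := by decide
    have hi3 : Finset.Icc 2 3 = ({2, 3} : Finset ℕ) := by decide
    have e1 := ind_one μ hμ1
    have e2 := ind_le_one μ 2
    have e3 := ind_le_one μ 3
    have e4 := ind_le_one μ 4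
    have e5 := ind_le_one μ 5
    have e6 := ind_le_one μ 6
    have hc0 : cc 0 = 1 := rfl
    have hc1 : cc 1 = 3 := rfl
    have hc2 : cc 2 = 6 := rfl
    have hc3 : cc 3 = 10 := rfl
    interval_cases y
    · omega
    · -- y = 1, x = 1, m = 2
      interval_cases x
      have h2 : μ 2 = 0 := by
        rcases hμ 2 with h | h
        · exact h
        · exact absurd ⟨rfl, rfl, h⟩ hexc
      have i2 : ind μ 2 = 0 := by simp [ind, h2]
      rw [show (1+1:ℕ) = 2 from rfl, TT, LL, hd2, hi1,
        Finset.sum_pair (by norm_num), Finset.sum_empty]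
      omega
    · -- y = 2
      interval_cases x
      · rw [show (1+2:ℕ) = 3 from rfl, TT, LL, hd3, hi2,
          Finset.sum_pair (by norm_num), Finset.sum_singleton]
        norm_num [cc]
        omega
      · rw [show (2+2:ℕ) = 4 from rfl, TT, LL, hd4, hi2,
          Finset.sum_insert (by decide), Finset.sum_pair (by norm_num), Finset.sum_singleton]
        norm_num [cc]
        have hcase : ind μ 2 = 0 → ind μ 4 ≤ 1 := fun _ => e4
        rcases Nat.le_one_iff_eq_zero_or_eq_one.mp e2 with i2 | i2 <;>
          rcases Nat.le_one_iff_eq_zero_or_eq_one.mp e4 with i4 | i4 <;> omega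
    · -- y = 3
      interval_cases x
      · rw [show (1+3:ℕ) = 4 from rfl, TT, LL, hd4, hi3,
          Finset.sum_insert (by decide), Finset.sum_pair (by norm_num),
          Finset.sum_pair (by norm_num)]
        norm_num [cc]
        omega
      · rw [show (2+3:ℕ) = 5 from rfl, TT, LL, hd5, hi3,
          Finset.sum_pair (by norm_num), Finset.sum_pair (by norm_num)]
        norm_num [cc]
        omega
      · rw [show (3+3:ℕ) = 6 from rfl, TT, LL, hd6, hi3,
          Finset.sum_insert (by decide), Finset.sum_insert (by decide),
          Finset.sum_pair (by norm_num), Finset.sum_pair (by norm_num)]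
        norm_num [cc]
        rcases Nat.le_one_iff_eq_zero_or_eq_one.mp e2 with i2 | i2 <;>
          rcases Nat.le_one_iff_eq_zero_or_eq_one.mp e3 with i3 | i3 <;>
          rcases Nat.le_one_iff_eq_zero_or_eq_one.mp e6 with i6 | i6 <;> omega

include hμ hμ1 in
lemma TT_le (x y : ℕ) (hx : 1 ≤ x) (hxy : x ≤ y) : TT μ (x + y) ≤ LL μ y := by
  by_cases hexc : x = 1 ∧ y = 1 ∧ μ 2 = 3
  · obtain ⟨rfl, rfl, h2⟩ := hexc
    have i2 : ind μ 2 = 1 := by simp [ind, h2]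
    have e1 := ind_one μ hμ1
    rw [show (1+1:ℕ) = 2 from rfl, TT, LL, show Nat.divisors 2 = {1,2} by decide,
      show Finset.Icc 2 1 = (∅ : Finset ℕ) by decide,
      Finset.sum_pair (by norm_num), Finset.sum_empty]
    have : cc 1 = 3 := rfl
    omega
  · exact le_of_lt (TT_lt μ hμ hμ1 x y hx hxy hexc)


-- ## The analytic part

lemma fA_zero : fA μ 0 1 = 1 := by rw [fA]

include hμ hμ1 in
lemma LL_pos_le (n : ℕ) : 0 < LL μ n := by
  have := cc_ge n
  unfold LL
  omega

lemma fA_rec (m : ℕ) : ((m+1 : ℕ) : ℝ) * fA μ (m+1) 1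
    = ∑ j ∈ Finset.range (m+1), (sigmaA μ (j+1) : ℝ) * fA μ (m - j) 1 := by
  rw [fA]
  have h : ((m+1 : ℕ) : ℝ) ≠ 0 := by positivity
  push_cast at h ⊢
  field_simp

include hμ hμ1 in
lemma LL_le_fA : ∀ n, (LL μ n : ℝ) ≤ fA μ n 1 := by
  intro n
  induction n using Nat.strong_induction_on with
  | _ n IH =>
    match n with
    | 0 =>
        rw [fA_zero]
        norm_num [LL, cc]
    | n+1 =>
        have hkey := key_sum μ hμ1 n
        have h1 : (((n+1) * LL μ (n+1) : ℕ) : ℝ)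
            ≤ ∑ j ∈ Finset.range (n+1), (sigmaA μ (j+1) : ℝ) * fA μ (n-j) 1 := by
          calc (((n+1) * LL μ (n+1) : ℕ) : ℝ)
              ≤ ((∑ j ∈ Finset.range (n+1), 3 * TT μ (j+1) * LL μ (n-j) : ℕ) : ℝ) :=
                Nat.cast_le.mpr hkey
            _ = ∑ j ∈ Finset.range (n+1), (sigmaA μ (j+1) : ℝ) * (LL μ (n-j) : ℝ) := by
                rw [Nat.cast_sum]
                refine Finset.sum_congr rfl fun j _ => ?_
                rw [sigma_eq μ hμ]
                push_cast
                ring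
            _ ≤ _ := by
                refine Finset.sum_le_sum fun j _ => ?_
                have hσ : (0:ℝ) ≤ (sigmaA μ (j+1) : ℝ) := Nat.cast_nonneg _
                exact mul_le_mul_of_nonneg_left (IH (n-j) (by omega)) hσ
        rw [← fA_rec] at h1
        have hpos : (0:ℝ) < ((n+1 : ℕ) : ℝ) := by positivity
        have h2 : ((n+1 : ℕ) : ℝ) * (LL μ (n+1) : ℝ) ≤ ((n+1:ℕ):ℝ) * fA μ (n+1) 1 := by
          push_cast at h1 ⊢
          linarith
        exact le_of_mul_le_mul_left h2 hpos

include hμ hμ1 in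
lemma fA_pos (n : ℕ) : 0 < fA μ n 1 := by
  have h1 : (0:ℝ) < (LL μ n : ℝ) := by
    have := LL_pos_le μ hμ hμ1 n
    exact_mod_cast this
  exact lt_of_lt_of_le h1 (LL_le_fA μ hμ hμ1 n)

include hμ hμ1 in
lemma sigma_ge_three (j : ℕ) : (3:ℝ) ≤ (sigmaA μ (j+1) : ℝ) := by
  rw [sigma_eq μ hμ]
  have h1 : (1:ℝ) ≤ (TT μ (j+1) : ℝ) := by exact_mod_cast TT_ge_one μ hμ1 (j+1) (by omega)
  push_cast
  nlinarith

include hμ hμ1 in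
lemma sigma_cross_le (k v : ℕ) (hkv : k ≤ v) :
    (sigmaA μ ((k+1) + (v+1)) : ℝ) ≤ (sigmaA μ (k+1) : ℝ) * fA μ (v+1) 1 := by
  rw [sigma_eq μ hμ, sigma_eq μ hμ]
  have hTT : TT μ ((k+1) + (v+1)) ≤ LL μ (v+1) :=
    TT_le μ hμ hμ1 (k+1) (v+1) (by omega) (by omega)
  have hL := LL_le_fA μ hμ hμ1 (v+1)
  have h3 : (3:ℝ) * (TT μ ((k+1)+(v+1)) : ℝ) ≤ 3 * fA μ (v+1) 1 := by
    have : (TT μ ((k+1)+(v+1)) : ℝ) ≤ (LL μ (v+1) : ℝ) := Nat.cast_le.mpr hTT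
    linarith
  have h4 : (3:ℝ) ≤ ((3 * TT μ (k+1) : ℕ) : ℝ) := by
    have h5 : (1:ℝ) ≤ (TT μ (k+1) : ℝ) := by exact_mod_cast TT_ge_one μ hμ1 (k+1) (by omega)
    push_cast
    nlinarith
  have hfpos := fA_pos μ hμ hμ1 (v+1)
  calc ((3 * TT μ ((k+1)+(v+1)) : ℕ) : ℝ) = 3 * (TT μ ((k+1)+(v+1)) : ℝ) := by push_cast; ring
    _ ≤ 3 * fA μ (v+1) 1 := h3
    _ ≤ ((3 * TT μ (k+1) : ℕ) : ℝ) * fA μ (v+1) 1 := by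
        exact mul_le_mul_of_nonneg_right h4 (le_of_lt hfpos)

include hμ hμ1 in
lemma sigma_cross_lt (k v : ℕ) (hkv : k ≤ v) (hexc : ¬(k + 1 = 1 ∧ v + 1 = 1 ∧ μ 2 = 3)) :
    (sigmaA μ ((k+1) + (v+1)) : ℝ) < (sigmaA μ (k+1) : ℝ) * fA μ (v+1) 1 := by
  rw [sigma_eq μ hμ, sigma_eq μ hμ]
  have hTT : TT μ ((k+1) + (v+1)) < LL μ (v+1) :=
    TT_lt μ hμ hμ1 (k+1) (v+1) (by omega) (by omega) hexc
  have hL := LL_le_fA μ hμ hμ1 (v+1)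
  have h3 : (3:ℝ) * (TT μ ((k+1)+(v+1)) : ℝ) < 3 * fA μ (v+1) 1 := by
    have h5 : (TT μ ((k+1)+(v+1)) : ℝ) + 1 ≤ (LL μ (v+1) : ℝ) := by
      exact_mod_cast Nat.succ_le_of_lt hTT
    linarith
  have h4 : (3:ℝ) ≤ ((3 * TT μ (k+1) : ℕ) : ℝ) := by
    have h5 : (1:ℝ) ≤ (TT μ (k+1) : ℝ) := by exact_mod_cast TT_ge_one μ hμ1 (k+1) (by omega)
    push_cast
    nlinarith
  have hfpos := fA_pos μ hμ hμ1 (v+1)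
  calc ((3 * TT μ ((k+1)+(v+1)) : ℕ) : ℝ) = 3 * (TT μ ((k+1)+(v+1)) : ℝ) := by push_cast; ring
    _ < 3 * fA μ (v+1) 1 := h3
    _ ≤ ((3 * TT μ (k+1) : ℕ) : ℝ) * fA μ (v+1) 1 :=
        mul_le_mul_of_nonneg_right h4 (le_of_lt hfpos)

include hμ hμ1 in
lemma sum_split (u v : ℕ) :
    ∑ j ∈ Finset.range (u+v+1+1), (sigmaA μ (j+1) : ℝ) * fA μ ((u+v+1) - j) 1
      = (∑ j ∈ Finset.range (v+1), (sigmaA μ (j+1) : ℝ) * fA μ ((u+1) + (v - j)) 1)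
        + ∑ k ∈ Finset.range (u+1), (sigmaA μ ((v+1+k)+1) : ℝ) * fA μ (u - k) 1 := by
  set f : ℕ → ℝ := fun j => (sigmaA μ (j+1) : ℝ) * fA μ ((u+v+1) - j) 1 with hf
  calc ∑ j ∈ Finset.range (u+v+1+1), f j
      = ∑ j ∈ Finset.Ico 0 ((v+1) + (u+1)), f j := by
        refine Finset.sum_congr ?_ fun _ _ => rfl
        rw [Finset.range_eq_Ico]
        congr 1
        ring
    _ = ∑ j ∈ Finset.Ico 0 (v+1), f j + ∑ j ∈ Finset.Ico (v+1) ((v+1)+(u+1)), f j :=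
        (Finset.sum_Ico_consecutive f (Nat.zero_le _) (Nat.le_add_right _ _)).symm
    _ = _ := by
        congr 1
        · refine Finset.sum_congr (by rw [Finset.range_eq_Ico]) fun j hj => ?_
          rw [Finset.mem_range] at hj
          show (sigmaA μ (j+1) : ℝ) * fA μ ((u+v+1) - j) 1 = _
          congr 2
          omega
        · rw [Finset.sum_Ico_eq_sum_range]
          refine Finset.sum_congr (by congr 1; omega) fun k hk => ?_
          rw [Finset.mem_range] at hk
          show (sigmaA μ ((v+1+k)+1) : ℝ) * fA μ ((u+v+1) - (v+1+k)) 1 = _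
          congr 2
          omega

include hμ hμ1 in
lemma weak_superadd : ∀ s x y : ℕ, x + y = s → fA μ (x + y) 1 ≤ fA μ x 1 * fA μ y 1 := by
  intro s
  induction s using Nat.strong_induction_on with
  | _ s IH =>
    have key : ∀ u v : ℕ, u ≤ v → (u+1) + (v+1) = s →
        fA μ ((u+1) + (v+1)) 1 ≤ fA μ (u+1) 1 * fA μ (v+1) 1 := by
      intro u v huv hs
      have hrec := fA_rec μ (u+v+1)
      have hsplit := sum_split μ hμ hμ1 u v
      have hyrec := fA_rec μ v
      have hxrec := fA_rec μ u
      have hb1 : ∑ j ∈ Finset.range (v+1), (sigmaA μ (j+1) : ℝ) * fA μ ((u+1) + (v - j)) 1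
          ≤ fA μ (u+1) 1 * (((v+1:ℕ):ℝ) * fA μ (v+1) 1) := by
        rw [hyrec, Finset.mul_sum]
        refine Finset.sum_le_sum fun j hj => ?_
        rw [Finset.mem_range] at hj
        have hIH : fA μ ((u+1) + (v-j)) 1 ≤ fA μ (u+1) 1 * fA μ (v-j) 1 :=
          IH ((u+1) + (v-j)) (by omega) (u+1) (v-j) rfl
        have hσ : (0:ℝ) ≤ (sigmaA μ (j+1) : ℝ) := Nat.cast_nonneg _
        calc (sigmaA μ (j+1) : ℝ) * fA μ ((u+1) + (v-j)) 1
            ≤ (sigmaA μ (j+1) : ℝ) * (fA μ (u+1) 1 * fA μ (v-j) 1) :=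
              mul_le_mul_of_nonneg_left hIH hσ
          _ = fA μ (u+1) 1 * ((sigmaA μ (j+1) : ℝ) * fA μ (v-j) 1) := by ring
      have hb2 : ∑ k ∈ Finset.range (u+1), (sigmaA μ ((v+1+k)+1) : ℝ) * fA μ (u - k) 1
          ≤ fA μ (v+1) 1 * (((u+1:ℕ):ℝ) * fA μ (u+1) 1) := by
        rw [hxrec, Finset.mul_sum]
        refine Finset.sum_le_sum fun k hk => ?_
        rw [Finset.mem_range] at hk
        have hcross : (sigmaA μ ((k+1) + (v+1)) : ℝ) ≤ (sigmaA μ (k+1) : ℝ) * fA μ (v+1) 1 :=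
          sigma_cross_le μ hμ hμ1 k v (by omega)
        have hidx : (v+1+k)+1 = (k+1) + (v+1) := by ring
        rw [hidx]
        have hfnn : (0:ℝ) ≤ fA μ (u-k) 1 := le_of_lt (fA_pos μ hμ hμ1 _)
        calc (sigmaA μ ((k+1)+(v+1)) : ℝ) * fA μ (u-k) 1
            ≤ ((sigmaA μ (k+1) : ℝ) * fA μ (v+1) 1) * fA μ (u-k) 1 :=
              mul_le_mul_of_nonneg_right hcross hfnn
          _ = fA μ (v+1) 1 * ((sigmaA μ (k+1) : ℝ) * fA μ (u-k) 1) := by ring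
      have hN : ((u+v+1+1 : ℕ) : ℝ) * fA μ ((u+1)+(v+1)) 1
          ≤ ((u+v+1+1 : ℕ) : ℝ) * (fA μ (u+1) 1 * fA μ (v+1) 1) := by
        have hidx2 : u+v+1+1 = (u+1)+(v+1) := by ring
        calc ((u+v+1+1 : ℕ) : ℝ) * fA μ ((u+1)+(v+1)) 1
            = ((u+v+1+1 : ℕ) : ℝ) * fA μ (u+v+1+1) 1 := by rw [hidx2]
          _ = ∑ j ∈ Finset.range (u+v+1+1), (sigmaA μ (j+1) : ℝ) * fA μ ((u+v+1) - j) 1 := hrec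
          _ = _ + _ := hsplit
          _ ≤ fA μ (u+1) 1 * (((v+1:ℕ):ℝ) * fA μ (v+1) 1)
              + fA μ (v+1) 1 * (((u+1:ℕ):ℝ) * fA μ (u+1) 1) := add_le_add hb1 hb2
          _ = ((u+v+1+1 : ℕ) : ℝ) * (fA μ (u+1) 1 * fA μ (v+1) 1) := by push_cast; ring
      have hpos : (0:ℝ) < ((u+v+1+1 : ℕ) : ℝ) := by positivity
      exact le_of_mul_le_mul_left hN hpos
    intro x y hxy
    match x, y with
    | 0, y => rw [Nat.zero_add, fA_zero, one_mul]
    | x+1, 0 => rw [Nat.add_zero, fA_zero, mul_one]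
    | x+1, y+1 =>
        rcases le_total x y with h | h
        · exact key x y h hxy
        · have h2 := key y x h (by omega)
          calc fA μ ((x+1)+(y+1)) 1 = fA μ ((y+1)+(x+1)) 1 := by rw [Nat.add_comm (x+1)]
            _ ≤ fA μ (y+1) 1 * fA μ (x+1) 1 := h2
            _ = fA μ (x+1) 1 * fA μ (y+1) 1 := mul_comm _ _

include hμ hμ1 in
lemma main_lt (u v : ℕ) (huv : u ≤ v) (hexc : ¬(u + 1 = 1 ∧ v + 1 = 1 ∧ μ 2 = 3)) :
    fA μ ((u+1) + (v+1)) 1 < fA μ (u+1) 1 * fA μ (v+1) 1 := by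
  have hrec := fA_rec μ (u+v+1)
  have hsplit := sum_split μ hμ hμ1 u v
  have hyrec := fA_rec μ v
  have hxrec := fA_rec μ u
  have hb1 : ∑ j ∈ Finset.range (v+1), (sigmaA μ (j+1) : ℝ) * fA μ ((u+1) + (v - j)) 1
      ≤ fA μ (u+1) 1 * (((v+1:ℕ):ℝ) * fA μ (v+1) 1) := by
    rw [hyrec, Finset.mul_sum]
    refine Finset.sum_le_sum fun j hj => ?_
    rw [Finset.mem_range] at hj
    have hIH : fA μ ((u+1) + (v-j)) 1 ≤ fA μ (u+1) 1 * fA μ (v-j) 1 :=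
      weak_superadd μ hμ hμ1 ((u+1)+(v-j)) (u+1) (v-j) rfl
    have hσ : (0:ℝ) ≤ (sigmaA μ (j+1) : ℝ) := Nat.cast_nonneg _
    calc (sigmaA μ (j+1) : ℝ) * fA μ ((u+1) + (v-j)) 1
        ≤ (sigmaA μ (j+1) : ℝ) * (fA μ (u+1) 1 * fA μ (v-j) 1) :=
          mul_le_mul_of_nonneg_left hIH hσ
      _ = fA μ (u+1) 1 * ((sigmaA μ (j+1) : ℝ) * fA μ (v-j) 1) := by ring
  have hb2 : ∑ k ∈ Finset.range (u+1), (sigmaA μ ((v+1+k)+1) : ℝ) * fA μ (u - k) 1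
      < fA μ (v+1) 1 * (((u+1:ℕ):ℝ) * fA μ (u+1) 1) := by
    rw [hxrec, Finset.mul_sum]
    refine Finset.sum_lt_sum (fun k hk => ?_) ⟨u, Finset.self_mem_range_succ u, ?_⟩
    · rw [Finset.mem_range] at hk
      have hcross : (sigmaA μ ((k+1) + (v+1)) : ℝ) ≤ (sigmaA μ (k+1) : ℝ) * fA μ (v+1) 1 :=
        sigma_cross_le μ hμ hμ1 k v (by omega)
      have hidx : (v+1+k)+1 = (k+1) + (v+1) := by ring
      rw [hidx]
      have hfnn : (0:ℝ) ≤ fA μ (u-k) 1 := le_of_lt (fA_pos μ hμ hμ1 _)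
      calc (sigmaA μ ((k+1)+(v+1)) : ℝ) * fA μ (u-k) 1
          ≤ ((sigmaA μ (k+1) : ℝ) * fA μ (v+1) 1) * fA μ (u-k) 1 :=
            mul_le_mul_of_nonneg_right hcross hfnn
        _ = fA μ (v+1) 1 * ((sigmaA μ (k+1) : ℝ) * fA μ (u-k) 1) := by ring
    · have hcross : (sigmaA μ ((u+1) + (v+1)) : ℝ) < (sigmaA μ (u+1) : ℝ) * fA μ (v+1) 1 :=
        sigma_cross_lt μ hμ hμ1 u v huv hexc
      have hidx : (v+1+u)+1 = (u+1) + (v+1) := by ring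
      rw [hidx]
      have hu0 : u - u = 0 := Nat.sub_self u
      rw [hu0, fA_zero, mul_one]
      calc (sigmaA μ ((u+1)+(v+1)) : ℝ)
          < (sigmaA μ (u+1) : ℝ) * fA μ (v+1) 1 := hcross
        _ = fA μ (v+1) 1 * ((sigmaA μ (u+1) : ℝ) * 1) := by ring
  have hN : ((u+v+1+1 : ℕ) : ℝ) * fA μ ((u+1)+(v+1)) 1
      < ((u+v+1+1 : ℕ) : ℝ) * (fA μ (u+1) 1 * fA μ (v+1) 1) := by
    have hidx2 : u+v+1+1 = (u+1)+(v+1) := by ring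
    calc ((u+v+1+1 : ℕ) : ℝ) * fA μ ((u+1)+(v+1)) 1
        = ((u+v+1+1 : ℕ) : ℝ) * fA μ (u+v+1+1) 1 := by rw [hidx2]
      _ = ∑ j ∈ Finset.range (u+v+1+1), (sigmaA μ (j+1) : ℝ) * fA μ ((u+v+1) - j) 1 := hrec
      _ = _ + _ := hsplit
      _ < fA μ (u+1) 1 * (((v+1:ℕ):ℝ) * fA μ (v+1) 1)
          + fA μ (v+1) 1 * (((u+1:ℕ):ℝ) * fA μ (u+1) 1) := add_lt_add_of_le_of_lt hb1 hb2
      _ = ((u+v+1+1 : ℕ) : ℝ) * (fA μ (u+1) 1 * fA μ (v+1) 1) := by push_cast; ring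
  have hpos : (0:ℝ) < ((u+v+1+1 : ℕ) : ℝ) := by positivity
  exact lt_of_mul_lt_mul_left hN (le_of_lt hpos)

end Stmt13Aux

/-- For a multiset B of positive integers with 1 in B in which every element occurs with multiplicity exactly 3, the B-partition function p_B(n) = f_{B,n}(1) satisfies p_B(a) p_B(b) > p_B(a+b) for all a, b >= 1, except possibly a = b = 1 when 2 in B. -/
theorem stmt_13 (μ : ℕ → ℕ) (hμ0 : μ 0 = 0) (hμ : ∀ j, μ j = 0 ∨ μ j = 3) (hμ1 : μ 1 = 3)
    (a b : ℕ) (ha : 1 ≤ a) (hb : 1 ≤ b) (h : ¬(a = 1 ∧ b = 1 ∧ μ 2 = 3)) :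
    fA μ a 1 * fA μ b 1 > fA μ (a + b) 1 := by
  obtain ⟨u, rfl⟩ : ∃ u, a = u + 1 := ⟨a - 1, by omega⟩
  obtain ⟨v, rfl⟩ : ∃ v, b = v + 1 := ⟨b - 1, by omega⟩
  rcases le_total u v with huv | huv
  · exact Stmt13Aux.main_lt μ hμ hμ1 u v huv h
  · have h2 : ¬(v + 1 = 1 ∧ u + 1 = 1 ∧ μ 2 = 3) := by
      intro ⟨h1, h2', h3⟩
      exact h ⟨h2', h1, h3⟩
    have := Stmt13Aux.main_lt μ hμ hμ1 v u huv h2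
    calc fA μ ((u+1) + (v+1)) 1 = fA μ ((v+1) + (u+1)) 1 := by rw [Nat.add_comm (u+1)]
      _ < fA μ (v+1) 1 * fA μ (u+1) 1 := this
      _ = fA μ (u+1) 1 * fA μ (v+1) 1 := mul_comm _ _
end

section
/- The function Ψ(x) = (x+1)(x+2) − 4x(1 + ln(2x)) is non-negative for all real x ≥ 15. -/
/-- `Ψ(x) = (x+1)(x+2) − 4x(1 + ln(2x))` is non-negative for all real `x ≥ 15`. -/
theorem stmt_14 (x : ℝ) (hx : 15 ≤ x) :
    0 ≤ (x + 1) * (x + 2) - 4 * x * (1 + Real.log (2 * x)) := by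
  have hxpos : (0:ℝ) < x := by linarith
  have h30 : Real.log 30 ≤ 3.5 := by
    rw [Real.log_le_iff_le_exp (by norm_num)]
    have h1 : (2.7182818283:ℝ) < Real.exp 1 := Real.exp_one_gt_d9
    have h2 : (1.5:ℝ) ≤ Real.exp 0.5 := by
      have := Real.add_one_le_exp (0.5:ℝ); linarith
    have h35 : Real.exp (3.5:ℝ) = Real.exp 1 * Real.exp 1 * Real.exp 1 * Real.exp 0.5 := by
      rw [← Real.exp_add, ← Real.exp_add, ← Real.exp_add]; norm_num
    rw [h35]
    have e1 : (2.7182818283:ℝ) ≤ Real.exp 1 := le_of_lt h1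
    have s1 : (2.7182818283:ℝ)*2.7182818283 ≤ Real.exp 1 * Real.exp 1 :=
      mul_le_mul e1 e1 (by norm_num) (Real.exp_pos 1).le
    have s2 : (2.7182818283:ℝ)*2.7182818283*2.7182818283 ≤
        Real.exp 1 * Real.exp 1 * Real.exp 1 :=
      mul_le_mul s1 e1 (by norm_num) (by positivity)
    have s3 := mul_le_mul s2 h2 (by norm_num) (by positivity)
    calc (30:ℝ) ≤ 2.7182818283*2.7182818283*2.7182818283*1.5 := by norm_num
      _ ≤ _ := s3
  have hconc : Real.log (2 * x) ≤ Real.log 30 + x / 15 - 1 := by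
    have hy : (0:ℝ) < 2 * x / 30 := by linarith
    have := Real.log_le_sub_one_of_pos hy
    have hlog : Real.log (2 * x / 30) = Real.log (2 * x) - Real.log 30 := by
      rw [Real.log_div (by linarith) (by norm_num)]
    rw [hlog] at this
    linarith
  nlinarith [sq_nonneg (x - 15), hconc, h30]
end
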